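/- arXiv:1603.05465 — 14 statements merged into one kernel-verified Lean document; each statement's English description precedes it below -/
import Mathlib

section
/- The Young function Ψ₂(y) = (1+|y|)·log(1+|y|) − |y| satisfies the generalized Δ₂ condition: for every β ≥ 0 and every y ∈ ℝ, Ψ₂(β y) ≤ max(β², 1) · Ψ₂(y). -/
open Real

private noncomputable def f2 : ℝ → ℝ := fun t => (1 + t) * Real.log (1 + t) - t

private lemma f2_hasDeriv {t : ℝ} (ht : 0 ≤ t) : HasDerivAt f2 (Real.log (1 + t)) t := by
  have h1 : (0:ℝ) < 1 + t := by linarith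
  have h : HasDerivAt (fun t : ℝ => (1 + t) * Real.log (1 + t))
      (1 * Real.log (1 + t) + (1 + t) * ((1:ℝ) / (1 + t))) t := by
    have ha : HasDerivAt (fun t : ℝ => 1 + t) 1 t := by
      simpa using (hasDerivAt_id t).const_add 1
    have hb : HasDerivAt (fun t : ℝ => Real.log (1 + t)) (1 / (1 + t)) t := by
      simpa [Function.comp_def] using (Real.hasDerivAt_log h1.ne').comp t ha
    exact ha.mul hb
  have h' := h.sub (hasDerivAt_id t)
  have heq : 1 * Real.log (1 + t) + (1 + t) * ((1:ℝ) / (1 + t)) - 1 = Real.log (1 + t) := by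
    field_simp
    ring
  rw [heq] at h'
  exact h'

private lemma f2_mono : MonotoneOn f2 (Set.Ici (0:ℝ)) := by
  have hc : ContinuousOn f2 (Set.Ici (0:ℝ)) := fun x hx =>
    ((f2_hasDeriv hx).continuousAt).continuousWithinAt
  refine monotoneOn_of_deriv_nonneg (convex_Ici 0) hc (fun x hx => ?_) (fun x hx => ?_)
  · exact ((f2_hasDeriv (le_of_lt (by simpa using hx))).differentiableAt).differentiableWithinAt
  · rw [interior_Ici] at hx
    rw [(f2_hasDeriv hx.le).deriv]
    exact Real.log_nonneg (by linarith [(Set.mem_Ioi.mp hx).le])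

private lemma f2_nonneg {t : ℝ} (ht : 0 ≤ t) : 0 ≤ f2 t := by
  have := f2_mono (Set.self_mem_Ici) ht ht
  simpa [f2] using this

private lemma f2_key {β : ℝ} (hβ : 1 ≤ β) {t : ℝ} (ht : 0 ≤ t) :
    f2 (β * t) ≤ β ^ 2 * f2 t := by
  have hβ0 : 0 < β := lt_of_lt_of_le one_pos hβ
  set g : ℝ → ℝ := fun t => β ^ 2 * f2 t - f2 (β * t) with hg
  have hderiv : ∀ x : ℝ, 0 ≤ x → HasDerivAt g
      (β ^ 2 * Real.log (1 + x) - β * Real.log (1 + β * x)) x := by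
    intro x hx
    have h1 := (f2_hasDeriv hx).const_mul (β ^ 2)
    have h2 : HasDerivAt (fun x : ℝ => f2 (β * x)) (Real.log (1 + β * x) * β) x := by
      have := (f2_hasDeriv (mul_nonneg hβ0.le hx)).comp x
        ((hasDerivAt_id x).const_mul β)
      simpa [Function.comp_def] using this
    have h3 := h1.sub h2
    rw [hg]
    exact h3.congr_deriv (by ring)
  have hmono : MonotoneOn g (Set.Ici (0:ℝ)) := by
    refine monotoneOn_of_deriv_nonneg (convex_Ici 0)
      (fun x hx => ((hderiv x hx).continuousAt).continuousWithinAt)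
      (fun x hx => ?_) (fun x hx => ?_)
    · rw [interior_Ici] at hx
      exact ((hderiv x hx.le).differentiableAt).differentiableWithinAt
    · rw [interior_Ici] at hx
      rw [(hderiv x hx.le).deriv]
      have hb : 1 + β * x ≤ (1 + x) ^ β :=
        one_add_mul_self_le_rpow_one_add (by linarith [(Set.mem_Ioi.mp hx).le]) hβ
      have hlog : Real.log (1 + β * x) ≤ β * Real.log (1 + x) := by
        calc Real.log (1 + β * x) ≤ Real.log ((1 + x) ^ β) :=
              Real.log_le_log (by nlinarith [(Set.mem_Ioi.mp hx).le]) hb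
          _ = β * Real.log (1 + x) := Real.log_rpow (by linarith [(Set.mem_Ioi.mp hx).le]) β
      nlinarith
  have h0 : g 0 = 0 := by simp [hg, f2]
  have := hmono (Set.self_mem_Ici) ht ht
  rw [h0] at this
  simp only [hg] at this
  linarith

/-- The Young function `Ψ₂(y) = (1+|y|)·log(1+|y|) − |y|` satisfies the generalized
`Δ₂` condition: `Ψ₂(β y) ≤ max(β², 1) · Ψ₂(y)` for every `β ≥ 0` and `y`. -/
theorem psi2_generalized_delta2
    (Ψ₂ : ℝ → ℝ) (hΨ₂ : ∀ y, Ψ₂ y = (1 + |y|) * Real.log (1 + |y|) - |y|) :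
    ∀ β : ℝ, 0 ≤ β → ∀ y : ℝ, Ψ₂ (β * y) ≤ max (β ^ 2) 1 * Ψ₂ y := by
  intro β hβ y
  have habs : |β * y| = β * |y| := by rw [abs_mul, abs_of_nonneg hβ]
  have hΨf : ∀ z : ℝ, Ψ₂ z = f2 |z| := fun z => by rw [hΨ₂ z]; rfl
  rw [hΨf, hΨf, habs]
  have hy : (0:ℝ) ≤ |y| := abs_nonneg y
  rcases le_or_gt β 1 with h1 | h1
  · have hmax : max (β ^ 2) 1 = 1 := max_eq_right (by nlinarith)
    rw [hmax, one_mul]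
    exact f2_mono (Set.mem_Ici.2 (mul_nonneg hβ hy)) (Set.mem_Ici.2 hy)
      (by nlinarith)
  · have hmax : max (β ^ 2) 1 = β ^ 2 := max_eq_left (by nlinarith)
    rw [hmax]
    exact f2_key h1.le hy
end

section
/- Let (X, F, μ) be a probability space and p, q be strictly positive probability densities with respect to μ. If the Kullback–Leibler divergence D(q‖p) = ∫ q·log(q/p) dμ is finite and u : X → ℝ satisfies ∫ (cosh(α·u) − 1)·p dμ < ∞ for some α > 0, then u is integrable with respect to the measure q·dμ. -/
open MeasureTheory Real

lemma key_young (p q t : ℝ) (hp : 0 < p) (hq : 0 < q) :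
    q * t ≤ q * Real.log (q / p) + p * Real.exp t := by
  have h := Real.add_one_le_exp (t - Real.log (q / p))
  have hlog : Real.exp (Real.log (q / p)) = q / p := Real.exp_log (by positivity)
  rw [Real.exp_sub, hlog] at h
  have h2 : t - Real.log (q / p) ≤ Real.exp t / (q / p) := by
    nlinarith [Real.exp_pos t]
  have h3 : q * (t - Real.log (q / p)) ≤ q * (Real.exp t / (q / p)) :=
    mul_le_mul_of_nonneg_left h2 hq.le
  have h4 : q * (Real.exp t / (q / p)) = p * Real.exp t := by
    field_simp
  nlinarith [h3, h4]

lemma exp_abs_le_two_cosh (y : ℝ) : Real.exp |y| ≤ 2 * Real.cosh y := by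
  rw [Real.cosh_eq]
  rcases abs_cases y with ⟨h, _⟩ | ⟨h, _⟩ <;> rw [h] <;>
    nlinarith [Real.exp_pos y, Real.exp_pos (-y)]

/-- If `D(q‖p) < ∞` and `u ∈ L^{Φ₁}(p)` (i.e. `∫ (cosh(αu)−1)·p dμ < ∞` for some `α > 0`),
then `u` is integrable with respect to `q·dμ`. -/
theorem integrable_of_orlicz_and_finite_divergence
    {X : Type*} [MeasurableSpace X] (μ : Measure X) [IsProbabilityMeasure μ]
    (p q u : X → ℝ) (hp : Measurable p) (hq : Measurable q) (hu : Measurable u)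
    (hp_pos : ∀ᵐ x ∂μ, 0 < p x) (hq_pos : ∀ᵐ x ∂μ, 0 < q x)
    (hp_int : ∫ x, p x ∂μ = 1) (hq_int : ∫ x, q x ∂μ = 1)
    (hD : Integrable (fun x => q x * Real.log (q x / p x)) μ)
    (hOrlicz : ∃ α > (0 : ℝ), Integrable (fun x => (Real.cosh (α * u x) - 1) * p x) μ) :
    Integrable (fun x => u x * q x) μ := by
  obtain ⟨α, hα, hcosh⟩ := hOrlicz
  have hpI : Integrable p μ := by
    by_contra h
    rw [integral_undef h] at hp_int
    norm_num at hp_int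
  set g : X → ℝ := fun x =>
    α⁻¹ * (q x * Real.log (q x / p x) + 2 * ((Real.cosh (α * u x) - 1) * p x) + 2 * p x)
    with hg
  have hgI : Integrable g μ := by
    apply Integrable.const_mul
    exact (hD.add (hcosh.const_mul 2)).add (hpI.const_mul 2)
  refine Integrable.mono' hgI (hu.mul hq).aestronglyMeasurable ?_
  filter_upwards [hp_pos, hq_pos] with x hpx hqx
  have h1 : q x * (α * |u x|) ≤
      q x * Real.log (q x / p x) + p x * Real.exp (α * |u x|) :=
    key_young (p x) (q x) (α * |u x|) hpx hqx
  have h2 : Real.exp (α * |u x|) ≤ 2 * Real.cosh (α * u x) := by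
    have : α * |u x| = |α * u x| := by
      rw [abs_mul, abs_of_pos hα]
    rw [this]
    exact exp_abs_le_two_cosh (α * u x)
  have h3 : q x * (α * |u x|) ≤
      q x * Real.log (q x / p x) + 2 * ((Real.cosh (α * u x) - 1) * p x) + 2 * p x := by
    nlinarith [h1, h2, hpx.le]
  rw [Real.norm_eq_abs, abs_mul, abs_of_pos hqx]
  rw [hg]
  rw [mul_comm (q x) (α * |u x|), mul_assoc] at h3
  calc |u x| * q x = α⁻¹ * (α * (|u x| * q x)) := by
        field_simp
    _ ≤ α⁻¹ * (q x * Real.log (q x / p x) + 2 * ((Real.cosh (α * u x) - 1) * p x) + 2 * p x) :=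
        mul_le_mul_of_nonneg_left h3 (by positivity)
end

section
/- Let (X, F, μ) be a probability space and p, q strictly positive densities. If ∫ (q/p)^α · p dμ < ∞ for all α in an open interval containing [0,1] (i.e., p and q are connected by an open exponential arc), then for every θ in that interval the normalized density p(θ) ∝ p^{1−θ}·q^{θ} is connected to p by an open exponential arc. -/
open MeasureTheory Real Set

/-- If `p` and `q` are connected by an open exponential arc, then every intermediate
normalized density `p(θ) ∝ p^{1−θ}·q^{θ}` is connected to `p` by an open exponential arc. -/
theorem exponential_arc_intermediate_connected
    {X : Type*} [MeasurableSpace X] (μ : Measure X) [IsProbabilityMeasure μ]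
    (p q : X → ℝ) (hp : Measurable p) (hq : Measurable q)
    (hp_pos : ∀ᵐ x ∂μ, 0 < p x) (hq_pos : ∀ᵐ x ∂μ, 0 < q x)
    (hp_int : ∫ x, p x ∂μ = 1) (hq_int : ∫ x, q x ∂μ = 1)
    (a b : ℝ) (ha : a < 0) (hb : 1 < b)
    (harc : ∀ θ ∈ Set.Ioo a b, Integrable (fun x => p x ^ (1 - θ) * q x ^ θ) μ) :
    ∀ θ ∈ Set.Ioo a b,
      ∃ a' < (0 : ℝ), ∃ b' > (1 : ℝ), ∀ s ∈ Set.Ioo a' b',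
        Integrable
          (fun x => p x ^ (1 - s) *
            (p x ^ (1 - θ) * q x ^ θ / ∫ y, p y ^ (1 - θ) * q y ^ θ ∂μ) ^ s) μ := by
  intro θ hθ
  set Z := ∫ y, p y ^ (1 - θ) * q y ^ θ ∂μ with hZdef
  have hZint := harc θ hθ
  have hZpos : 0 < Z := by
    rw [hZdef]
    rw [integral_pos_iff_support_of_nonneg_ae ?_ hZint]
    · have : ∀ᵐ x ∂μ, x ∈ Function.support fun x => p x ^ (1 - θ) * q x ^ θ := by
        filter_upwards [hp_pos, hq_pos] with x hpx hqx
        simp only [Function.mem_support]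
        positivity
      rw [pos_iff_ne_zero]
      intro h0
      have h2 := measure_eq_zero_iff_ae_notMem.mp h0
      have h3 := this.and h2
      rcases h3.exists with ⟨x, hx1, hx2⟩
      exact hx2 hx1
    · filter_upwards [hp_pos, hq_pos] with x hpx hqx
      positivity
  have key : ∀ s : ℝ, s * θ ∈ Set.Ioo a b →
      Integrable (fun x => p x ^ (1 - s) * (p x ^ (1 - θ) * q x ^ θ / Z) ^ s) μ := by
    intro s hs
    have h := ((harc (s * θ) hs).const_mul (Z ^ (-s)))
    refine h.congr ?_
    filter_upwards [hp_pos, hq_pos] with x hpx hqx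
    have e1 : (1 : ℝ) - s * θ = (1 - s) + (1 - θ) * s := by ring
    rw [Real.div_rpow (by positivity) hZpos.le,
      Real.mul_rpow (by positivity) (by positivity),
      ← Real.rpow_mul hpx.le, ← Real.rpow_mul hqx.le,
      Real.rpow_neg hZpos.le, e1, Real.rpow_add hpx, mul_comm s θ]
    ring
  rcases lt_trichotomy θ 0 with hneg | hzero | hpos
  · refine ⟨b / θ, div_neg_of_pos_of_neg (lt_trans zero_lt_one hb) hneg,
      a / θ, (one_lt_div_of_neg hneg).mpr hθ.1, fun s hs => ?_⟩
    refine key s ⟨?_, ?_⟩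
    · exact (lt_div_iff_of_neg hneg).mp hs.2
    · exact (div_lt_iff_of_neg hneg).mp hs.1
  · subst hzero
    refine ⟨-1, by norm_num, 2, by norm_num, fun s hs => ?_⟩
    exact key s (by simpa using ⟨ha, hb.trans' zero_lt_one⟩)
  · refine ⟨a / θ, div_neg_of_neg_of_pos ha hpos, b / θ, (one_lt_div hpos).mpr hθ.2,
      fun s hs => ?_⟩
    refine key s ⟨?_, ?_⟩
    · exact (div_lt_iff₀ hpos).mp hs.1
    · exact (lt_div_iff₀ hpos).mp hs.2
end

section
/- Two strictly positive densities p and q on a probability space are connected by an open exponential arc if and only if there exist an open interval I ⊃ [0,1] and a measurable function u with ∫ exp(α·|u|)·p dμ < ∞ for some α > 0, such that the curve θ ↦ e^{θu}·p / ∫ e^{θu}·p dμ is well-defined (finite normalization) for all θ ∈ I and equals p at θ=0 and q at θ=1. -/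
open MeasureTheory Real Set

lemma key_pt (pp qq θ : ℝ) (hpp : 0 < pp) (hqq : 0 < qq) :
    Real.exp (θ * Real.log (qq / pp)) * pp = pp ^ (1 - θ) * qq ^ θ := by
  have h1 : Real.exp (θ * Real.log (qq / pp)) = (qq / pp) ^ θ := by
    rw [Real.rpow_def_of_pos (div_pos hqq hpp), mul_comm]
  rw [h1, Real.div_rpow hqq.le hpp.le, Real.rpow_sub hpp, Real.rpow_one]
  have : pp ^ θ ≠ 0 := (Real.rpow_pos_of_pos hpp θ).ne'
  field_simp

/-- `p` and `q` are connected by an open exponential arc iff there are an open interval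
`I ⊃ [0,1]` and `u ∈ L^{Φ₁}(p)` such that `θ ↦ e^{θu}p/∫e^{θu}p dμ` is well defined on `I`
and equals `p` at `θ = 0` and `q` at `θ = 1`. -/
theorem open_exponential_arc_iff_exists_u
    {X : Type*} [MeasurableSpace X] (μ : Measure X) [IsProbabilityMeasure μ]
    (p q : X → ℝ) (hp : Measurable p) (hq : Measurable q)
    (hp_pos : ∀ᵐ x ∂μ, 0 < p x) (hq_pos : ∀ᵐ x ∂μ, 0 < q x)
    (hp_int : ∫ x, p x ∂μ = 1) (hq_int : ∫ x, q x ∂μ = 1) :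
    (∃ a < (0 : ℝ), ∃ b > (1 : ℝ), ∀ θ ∈ Set.Ioo a b,
        Integrable (fun x => p x ^ (1 - θ) * q x ^ θ) μ) ↔
    (∃ a < (0 : ℝ), ∃ b > (1 : ℝ), ∃ u : X → ℝ, Measurable u ∧
        (∃ α > (0 : ℝ), Integrable (fun x => Real.exp (α * |u x|) * p x) μ) ∧
        (∀ θ ∈ Set.Ioo a b, Integrable (fun x => Real.exp (θ * u x) * p x) μ) ∧
        (fun x => Real.exp (0 * u x) * p x / ∫ y, Real.exp (0 * u y) * p y ∂μ) =ᵐ[μ] p ∧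
        (fun x => Real.exp (1 * u x) * p x / ∫ y, Real.exp (1 * u y) * p y ∂μ) =ᵐ[μ] q) := by
  constructor
  · rintro ⟨a, ha, b, hb, harc⟩
    set u : X → ℝ := fun x => Real.log (q x / p x) with hu_def
    have hu_meas : Measurable u := (hq.div hp).log
    -- a.e. pointwise identity
    have A : ∀ θ : ℝ, ∀ᵐ x ∂μ, Real.exp (θ * u x) * p x = p x ^ (1 - θ) * q x ^ θ := by
      intro θ
      filter_upwards [hp_pos, hq_pos] with x hpx hqx
      exact key_pt _ _ _ hpx hqx
    have hint : ∀ θ ∈ Set.Ioo a b, Integrable (fun x => Real.exp (θ * u x) * p x) μ := by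
      intro θ hθ
      exact (harc θ hθ).congr ((A θ).mono fun x hx => hx.symm)
    refine ⟨a, ha, b, hb, u, hu_meas, ?_, hint, ?_, ?_⟩
    · -- exponential integrability of |u|
      set α := min (-a) 1 / 2 with hα_def
      have hα_pos : 0 < α := by
        have : 0 < min (-a) 1 := lt_min (by linarith) one_pos
        positivity
      have hα1 : α ∈ Set.Ioo a b := by
        constructor
        · linarith
        · have : α ≤ 1 / 2 := by
            apply div_le_div_of_nonneg_right ?_ (by norm_num)
            · exact min_le_right _ _
          linarith
      have hα2 : (-α) ∈ Set.Ioo a b := by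
        constructor
        · have : α ≤ -a / 2 := by
            apply div_le_div_of_nonneg_right (min_le_left _ _) (by norm_num)
          linarith
        · linarith
      refine ⟨α, hα_pos, ?_⟩
      have hgi : Integrable (fun x => Real.exp (α * u x) * p x +
          Real.exp ((-α) * u x) * p x) μ := (hint α hα1).add (hint (-α) hα2)
      refine hgi.mono' ?_ ?_
      · exact ((hu_meas.abs.const_mul α).exp.mul hp).aestronglyMeasurable
      · filter_upwards [hp_pos] with x hpx
        have hb : Real.exp (α * |u x|) ≤ Real.exp (α * u x) + Real.exp ((-α) * u x) := by
          rcases abs_cases (u x) with ⟨h, _⟩ | ⟨h, _⟩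
          · rw [h]; exact le_add_of_nonneg_right (Real.exp_pos _).le
          · rw [h]
            rw [show α * -u x = (-α) * u x by ring]
            exact le_add_of_nonneg_left (Real.exp_pos _).le
        have : ‖Real.exp (α * |u x|) * p x‖ = Real.exp (α * |u x|) * p x := by
          rw [Real.norm_eq_abs, abs_of_nonneg (by positivity)]
        rw [this]
        nlinarith [Real.exp_pos (α * |u x|), hpx.le, (Real.exp_pos (α * u x)).le]
    · -- θ = 0
      have h0 : (∫ y, Real.exp (0 * u y) * p y ∂μ) = 1 := by
        simp only [zero_mul, Real.exp_zero, one_mul]; exact hp_int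
      rw [h0]
      filter_upwards with x
      simp
    · -- θ = 1
      have hq1 : ∀ᵐ x ∂μ, Real.exp (1 * u x) * p x = q x := by
        filter_upwards [A 1] with x hx
        rw [hx]; simp
      have h1 : (∫ y, Real.exp (1 * u y) * p y ∂μ) = 1 := by
        rw [integral_congr_ae hq1]; exact hq_int
      rw [h1]
      filter_upwards [hq1] with x hx
      rw [hx]; simp
  · rintro ⟨a, ha, b, hb, u, hu_meas, _, hint, _, h1⟩
    refine ⟨a, ha, b, hb, ?_⟩
    set c := ∫ y, Real.exp (1 * u y) * p y ∂μ with hc_def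
    have h1mem : (1 : ℝ) ∈ Set.Ioo a b := ⟨by linarith, hb⟩
    have hc_nonneg : 0 ≤ c := by
      apply integral_nonneg_of_ae
      filter_upwards [hp_pos] with x hpx
      positivity
    have hc_ne : c ≠ 0 := by
      intro h0
      have : (1 : ℝ) = 0 := by
        rw [← hq_int, ← integral_congr_ae h1]
        simp [← hc_def, h0]
      norm_num at this
    have hc_pos : 0 < c := lt_of_le_of_ne hc_nonneg (Ne.symm hc_ne)
    intro θ hθ
    have key : ∀ᵐ x ∂μ, p x ^ (1 - θ) * q x ^ θ =
        (c ^ θ)⁻¹ * (Real.exp (θ * u x) * p x) := by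
      filter_upwards [h1, hp_pos] with x hqx hpx
      rw [← hqx]
      have hcθ : (0:ℝ) < c ^ θ := Real.rpow_pos_of_pos hc_pos θ
      rw [one_mul, Real.div_rpow (by positivity) hc_pos.le,
        Real.mul_rpow (Real.exp_pos _).le hpx.le, ← Real.exp_mul]
      have hps : p x ^ (1 - θ) * p x ^ θ = p x := by
        rw [← Real.rpow_add hpx]; simp
      field_simp
      exact hps
    exact ((hint θ hθ).const_mul ((c ^ θ)⁻¹)).congr (key.mono fun x hx => hx.symm)
end

section
/- Connection by open exponential arcs is an equivalence relation on the set of strictly positive probability densities: it is reflexive, symmetric, and transitive. -/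
open MeasureTheory Real Set
open scoped ENNReal

section Aux

variable {X : Type*} [MeasurableSpace X] {μ : Measure X}

/-- Hölder: product of powers of integrable nonneg functions is integrable. -/
lemma holder_mul {f g : X → ℝ}
    (hf : Integrable f μ) (hg : Integrable g μ)
    (hf0 : ∀ᵐ x ∂μ, 0 ≤ f x) (hg0 : ∀ᵐ x ∂μ, 0 ≤ g x)
    {l : ℝ} (hl0 : 0 < l) (hl1 : l < 1) :
    Integrable (fun x => f x ^ l * g x ^ (1 - l)) μ := by
  have hf1 : MemLp f 1 μ := memLp_one_iff_integrable.2 hf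
  have hg1 : MemLp g 1 μ := memLp_one_iff_integrable.2 hg
  have h1 := hf1.norm_rpow_div (ENNReal.ofReal l)
  have h2 := hg1.norm_rpow_div (ENNReal.ofReal (1 - l))
  rw [ENNReal.toReal_ofReal hl0.le] at h1
  rw [ENNReal.toReal_ofReal (by linarith : (0:ℝ) ≤ 1 - l)] at h2
  have hpqr : (1 : ℝ≥0∞) / 1 =
      1 / (1 / ENNReal.ofReal l) + 1 / (1 / ENNReal.ofReal (1 - l)) := by
    simp only [one_div, inv_inv, inv_one]
    rw [← ENNReal.ofReal_add hl0.le (by linarith), show l + (1 - l) = 1 by ring, ENNReal.ofReal_one]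
  have h3 := MemLp.smul (r := 1) h2 h1 (hpqr := ⟨by simpa only [one_div] using hpqr.symm⟩)
  rw [memLp_one_iff_integrable] at h3
  refine h3.congr ?_
  filter_upwards [hf0, hg0] with x hfx hgx
  simp [Pi.smul_apply, smul_eq_mul, Real.norm_of_nonneg hfx, Real.norm_of_nonneg hgx, abs_of_nonneg hfx, abs_of_nonneg hgx]

/-- Interpolation/convexity of the set of connecting parameters. -/
lemma interp_integrable {p r : X → ℝ}
    (hpp : ∀ᵐ x ∂μ, 0 < p x) (hrp : ∀ᵐ x ∂μ, 0 < r x)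
    {θ₁ θ₂ θ : ℝ}
    (h1 : Integrable (fun x => p x ^ (1 - θ₁) * r x ^ θ₁) μ)
    (h2 : Integrable (fun x => p x ^ (1 - θ₂) * r x ^ θ₂) μ)
    (hθ1 : θ₁ < θ) (hθ2 : θ < θ₂) :
    Integrable (fun x => p x ^ (1 - θ) * r x ^ θ) μ := by
  set l : ℝ := (θ₂ - θ) / (θ₂ - θ₁) with hl
  have h12 : θ₁ < θ₂ := hθ1.trans hθ2
  have hl0 : 0 < l := div_pos (by linarith) (by linarith)
  have hl1 : l < 1 := (div_lt_one (by linarith)).2 (by linarith)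
  have key : (θ₂ - θ) / (θ₂ - θ₁) * (θ₂ - θ₁) = θ₂ - θ :=
    div_mul_cancel₀ _ (by linarith : (0:ℝ) < θ₂ - θ₁).ne'
  have hA : (1 - θ₁) * l + (1 - θ₂) * (1 - l) = 1 - θ := by
    rw [hl]; linear_combination key
  have hB : θ₁ * l + θ₂ * (1 - l) = θ := by
    rw [hl]; linear_combination -key
  have H := holder_mul h1 h2 ?_ ?_ hl0 hl1
  · refine H.congr ?_
    filter_upwards [hpp, hrp] with x hpx hrx
    rw [Real.mul_rpow (by positivity) (by positivity),
        Real.mul_rpow (by positivity) (by positivity),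
        ← Real.rpow_mul hpx.le, ← Real.rpow_mul hrx.le,
        ← Real.rpow_mul hpx.le, ← Real.rpow_mul hrx.le]
    calc p x ^ ((1 - θ₁) * l) * r x ^ (θ₁ * l) *
          (p x ^ ((1 - θ₂) * (1 - l)) * r x ^ (θ₂ * (1 - l)))
        = p x ^ ((1 - θ₁) * l) * p x ^ ((1 - θ₂) * (1 - l)) *
          (r x ^ (θ₁ * l) * r x ^ (θ₂ * (1 - l))) := by ring
      _ = p x ^ ((1 - θ₁) * l + (1 - θ₂) * (1 - l)) * r x ^ (θ₁ * l + θ₂ * (1 - l)) := by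
          rw [← Real.rpow_add hpx, ← Real.rpow_add hrx]
      _ = p x ^ (1 - θ) * r x ^ θ := by rw [hA, hB]
  · filter_upwards [hpp, hrp] with x hpx hrx; positivity
  · filter_upwards [hpp, hrp] with x hpx hrx; positivity

/-- Combining two exponential arcs via Hölder with a cancellation of the middle density. -/
lemma combine_integrable {p q r : X → ℝ}
    (hpp : ∀ᵐ x ∂μ, 0 < p x) (hqp : ∀ᵐ x ∂μ, 0 < q x) (hrp : ∀ᵐ x ∂μ, 0 < r x)
    {l α β θ : ℝ} (hl0 : 0 < l) (hl1 : l < 1)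
    (hα : (1 - α) * l = 1 - θ) (hβ : β * (1 - l) = θ)
    (hmid : α * l + (1 - β) * (1 - l) = 0)
    (hF : Integrable (fun x => p x ^ (1 - α) * q x ^ α) μ)
    (hG : Integrable (fun x => q x ^ (1 - β) * r x ^ β) μ) :
    Integrable (fun x => p x ^ (1 - θ) * r x ^ θ) μ := by
  have H := holder_mul hF hG ?_ ?_ hl0 hl1
  · refine H.congr ?_
    filter_upwards [hpp, hqp, hrp] with x hpx hqx hrx
    rw [Real.mul_rpow (by positivity) (by positivity),
        Real.mul_rpow (by positivity) (by positivity),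
        ← Real.rpow_mul hpx.le, ← Real.rpow_mul hqx.le,
        ← Real.rpow_mul hqx.le, ← Real.rpow_mul hrx.le]
    calc p x ^ ((1 - α) * l) * q x ^ (α * l) *
          (q x ^ ((1 - β) * (1 - l)) * r x ^ (β * (1 - l)))
        = p x ^ ((1 - α) * l) * (q x ^ (α * l) * q x ^ ((1 - β) * (1 - l))) *
          r x ^ (β * (1 - l)) := by ring
      _ = p x ^ (1 - θ) * r x ^ θ := by
          rw [← Real.rpow_add hqx, hmid, Real.rpow_zero, mul_one, hα, hβ]
  · filter_upwards [hpp, hqp] with x hpx hqx; positivity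
  · filter_upwards [hqp, hrp] with x hqx hrx; positivity

/-- From two overlapping arcs, extend beyond θ = 1. -/
lemma extend_right {p q r : X → ℝ}
    (hpp : ∀ᵐ x ∂μ, 0 < p x) (hqp : ∀ᵐ x ∂μ, 0 < q x) (hrp : ∀ᵐ x ∂μ, 0 < r x)
    {a b c d : ℝ} (ha : a < 0) (hb : 1 < b) (hc : c < 0) (hd : 1 < d)
    (h1 : ∀ θ ∈ Ioo a b, Integrable (fun x => p x ^ (1 - θ) * q x ^ θ) μ)
    (h2 : ∀ θ ∈ Ioo c d, Integrable (fun x => q x ^ (1 - θ) * r x ^ θ) μ) :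
    ∃ θ : ℝ, 1 < θ ∧ Integrable (fun x => p x ^ (1 - θ) * r x ^ θ) μ := by
  set l : ℝ := (d - 1) / (2 * d) with hldef
  have hd0 : 0 < d := by linarith
  have hl0 : 0 < l := div_pos (by linarith) (by linarith)
  have hl1 : l < 1 := by
    rw [hldef, div_lt_one (by linarith)]; linarith
  set m : ℝ := min (1 + l * (b - 1)) ((d + 1) / 2) with hm
  have hm1 : 1 < m := by
    apply lt_min
    · nlinarith
    · linarith
  set θ : ℝ := (1 + m) / 2 with hθdef
  have hθ1 : 1 < θ := by rw [hθdef]; linarith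
  have hθm : θ < m := by rw [hθdef]; linarith
  set α : ℝ := 1 + (θ - 1) / l with hαdef
  set β : ℝ := θ / (1 - l) with hβdef
  have h1l : (0:ℝ) < 1 - l := by linarith
  have hK1 : (θ - 1) / l * l = θ - 1 := div_mul_cancel₀ _ hl0.ne'
  have hK2 : θ / (1 - l) * (1 - l) = θ := div_mul_cancel₀ _ h1l.ne'
  refine ⟨θ, hθ1, ?_⟩
  have hαmem : α ∈ Ioo a b := by
    constructor
    · have : 0 < (θ - 1) / l := div_pos (by linarith) hl0
      rw [hαdef]; linarith
    · have hθb : θ < 1 + l * (b - 1) := hθm.trans_le (min_le_left _ _)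
      have ht : (θ - 1) / l < b - 1 := (div_lt_iff₀ hl0).2 (by nlinarith)
      rw [hαdef]; linarith
  have hβmem : β ∈ Ioo c d := by
    constructor
    · have : 0 < θ / (1 - l) := div_pos (by linarith) h1l
      rw [hβdef]; linarith
    · have hθd : θ < (d + 1) / 2 := hθm.trans_le (min_le_right _ _)
      have hde : d * (1 - l) = (d + 1) / 2 := by
        rw [hldef]; field_simp; ring
      rw [hβdef, div_lt_iff₀ h1l]
      linarith
  have hα' : (1 - α) * l = 1 - θ := by
    rw [hαdef]; linear_combination -hK1
  have hβ' : β * (1 - l) = θ := by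
    rw [hβdef]; exact hK2
  have hmid : α * l + (1 - β) * (1 - l) = 0 := by
    rw [hαdef, hβdef]; linear_combination hK1 - hK2
  exact combine_integrable hpp hqp hrp hl0 hl1 hα' hβ' hmid (h1 α hαmem) (h2 β hβmem)

end Aux

/-- Connection by open exponential arcs is an equivalence relation on the set of strictly
positive probability densities. -/
theorem open_exponential_arc_equivalence
    {X : Type*} [MeasurableSpace X] (μ : Measure X) [IsProbabilityMeasure μ] :
    Equivalence
      (fun p q : {f : X → ℝ // Measurable f ∧ (∀ᵐ x ∂μ, 0 < f x) ∧ ∫ x, f x ∂μ = 1} =>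
        ∃ a < (0 : ℝ), ∃ b > (1 : ℝ), ∀ θ ∈ Set.Ioo a b,
          Integrable (fun x => p.1 x ^ (1 - θ) * q.1 x ^ θ) μ) := by
  have hint : ∀ p : {f : X → ℝ // Measurable f ∧ (∀ᵐ x ∂μ, 0 < f x) ∧ ∫ x, f x ∂μ = 1},
      Integrable p.1 μ := by
    intro p
    by_contra h
    have := p.2.2.2
    rw [integral_undef h] at this
    norm_num at this
  constructor
  · -- reflexivity
    intro p
    refine ⟨-1, by norm_num, 2, by norm_num, fun θ _ => ?_⟩
    refine (hint p).congr ?_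
    filter_upwards [p.2.2.1] with x hx
    rw [← Real.rpow_add hx]
    simp
  · -- symmetry
    rintro p q ⟨a, ha, b, hb, h⟩
    refine ⟨1 - b, by linarith, 1 - a, by linarith, fun θ hθ => ?_⟩
    refine (h (1 - θ) ⟨by linarith [hθ.2], by linarith [hθ.1]⟩).congr ?_
    refine Filter.Eventually.of_forall fun x => ?_
    rw [sub_sub_cancel]; ring
  · -- transitivity
    rintro p q r ⟨a, ha, b, hb, h1⟩ ⟨c, hc, d, hd, h2⟩
    obtain ⟨θ₂, hθ₂, hI₂⟩ :=
      extend_right p.2.2.1 q.2.2.1 r.2.2.1 ha hb hc hd h1 h2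
    obtain ⟨η, hη, hIη⟩ :=
      extend_right r.2.2.1 q.2.2.1 p.2.2.1 (by linarith : 1 - d < 0) (by linarith : 1 < 1 - c)
        (by linarith : 1 - b < 0) (by linarith : 1 < 1 - a)
        (fun θ hθ => (h2 (1 - θ) ⟨by linarith [hθ.2], by linarith [hθ.1]⟩).congr
          (Filter.Eventually.of_forall fun x => by rw [sub_sub_cancel]; ring))
        (fun θ hθ => (h1 (1 - θ) ⟨by linarith [hθ.2], by linarith [hθ.1]⟩).congr
          (Filter.Eventually.of_forall fun x => by rw [sub_sub_cancel]; ring))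
    set θ₁ : ℝ := 1 - η with hθ₁def
    have hθ₁ : θ₁ < 0 := by rw [hθ₁def]; linarith
    have hI₁ : Integrable (fun x => p.1 x ^ (1 - θ₁) * r.1 x ^ θ₁) μ := by
      refine hIη.congr ?_
      refine Filter.Eventually.of_forall fun x => ?_
      rw [hθ₁def, sub_sub_cancel]; ring
    refine ⟨θ₁, hθ₁, θ₂, hθ₂, fun θ hθ => ?_⟩
    exact interp_integrable p.2.2.1 r.2.2.1 hI₁ hI₂ hθ.1 hθ.2
end

section
/- Connection by open mixture arcs is an equivalence relation on the set of strictly positive probability densities: it is reflexive, symmetric, and transitive. -/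
open MeasureTheory Real Set

/-- Helper: if p connects to q and q connects to r by open mixture arcs, then the
mixture `(1-θ)p + θr` stays positive a.e. for θ slightly above 1. -/
lemma open_mixture_trans_right {X : Type*} [MeasurableSpace X] (μ : Measure X)
    (p q r : X → ℝ) {a b a' b' : ℝ} (ha : a < 0) (hb : 1 < b) (ha' : a' < 0) (hb' : 1 < b')
    (h1 : ∀ θ ∈ Set.Ioo a b, ∀ᵐ x ∂μ, 0 < (1 - θ) * p x + θ * q x)
    (h2 : ∀ θ ∈ Set.Ioo a' b', ∀ᵐ x ∂μ, 0 < (1 - θ) * q x + θ * r x) :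
    ∃ δ > (0 : ℝ), ∀ θ : ℝ, 1 < θ → θ < 1 + δ →
      ∀ᵐ x ∂μ, 0 < (1 - θ) * p x + θ * r x := by
  set t : ℝ := (1 + b') / 2 with ht_def
  have ht1 : 1 < t := by simp only [ht_def]; linarith
  have htb' : t < b' := by simp only [ht_def]; linarith
  have ht0 : 0 < t := by linarith
  refine ⟨min ((t - 1) / 2) ((b - 1) * (t - 1) / (2 * t)), ?_, ?_⟩
  · apply lt_min
    · linarith
    · exact div_pos (mul_pos (by linarith) (by linarith)) (by linarith)
  intro θ hθ1 hθ2
  have hθt : θ < t := by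
    have := min_le_left ((t - 1) / 2) ((b - 1) * (t - 1) / (2 * t))
    linarith
  have hθd : θ - 1 < (b - 1) * (t - 1) / (2 * t) := by
    have := min_le_right ((t - 1) / 2) ((b - 1) * (t - 1) / (2 * t))
    linarith
  have hθh : θ < 1 + (t - 1) / 2 := by
    have := min_le_left ((t - 1) / 2) ((b - 1) * (t - 1) / (2 * t))
    linarith
  have htθ : 0 < t - θ := by linarith
  set lam : ℝ := (t - θ) / t with hlam_def
  set s : ℝ := 1 + (θ - 1) * t / (t - θ) with hs_def
  have hlam0 : 0 < lam := by positivity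
  have hlam1 : lam < 1 := by
    rw [hlam_def, div_lt_one ht0]; linarith
  have hs_lt_b : s < b := by
    rw [hs_def]
    have h1' : (θ - 1) * t / (t - θ) < b - 1 := by
      rw [div_lt_iff₀ htθ]
      have htθ2 : (t - 1) / 2 ≤ t - θ := by linarith
      have hA : (θ - 1) * t < (b - 1) * (t - 1) / (2 * t) * t := by
        apply mul_lt_mul_of_pos_right hθd ht0
      have hB : (b - 1) * (t - 1) / (2 * t) * t = (b - 1) * ((t - 1) / 2) := by
        field_simp
      have hC : (b - 1) * ((t - 1) / 2) ≤ (b - 1) * (t - θ) := by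
        apply mul_le_mul_of_nonneg_left htθ2 (by linarith)
      linarith
    linarith
  have hs_gt_a : a < s := by
    have hs1 : 1 < s := by
      rw [hs_def]
      have : 0 < (θ - 1) * t / (t - θ) :=
        div_pos (mul_pos (by linarith) ht0) htθ
      linarith
    linarith
  have hs_mem : s ∈ Set.Ioo a b := ⟨hs_gt_a, hs_lt_b⟩
  have ht_mem : t ∈ Set.Ioo a' b' := ⟨by linarith, htb'⟩
  filter_upwards [h1 s hs_mem, h2 t ht_mem] with x hA hB
  have hkey : (1 - θ) * p x + θ * r x
      = lam * ((1 - s) * p x + s * q x) + (1 - lam) * ((1 - t) * q x + t * r x) := by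
    rw [hlam_def, hs_def]
    field_simp
    ring
  rw [hkey]
  have h1' : 0 < lam * ((1 - s) * p x + s * q x) := mul_pos hlam0 hA
  have h2' : 0 < (1 - lam) * ((1 - t) * q x + t * r x) :=
    mul_pos (by linarith) hB
  linarith

/-- Connection by open mixture arcs is an equivalence relation on the set of strictly
positive probability densities. -/
theorem open_mixture_arc_equivalence
    {X : Type*} [MeasurableSpace X] (μ : Measure X) [IsProbabilityMeasure μ] :
    Equivalence
      (fun p q : {f : X → ℝ // Measurable f ∧ (∀ᵐ x ∂μ, 0 < f x) ∧ ∫ x, f x ∂μ = 1} =>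
        ∃ a < (0 : ℝ), ∃ b > (1 : ℝ), ∀ θ ∈ Set.Ioo a b,
          ∀ᵐ x ∂μ, 0 < (1 - θ) * p.1 x + θ * q.1 x) := by
  constructor
  · -- reflexivity
    intro p
    refine ⟨-1, by norm_num, 2, by norm_num, fun θ _ => ?_⟩
    filter_upwards [p.2.2.1] with x hx
    have : (1 - θ) * p.1 x + θ * p.1 x = p.1 x := by ring
    linarith
  · -- symmetry
    rintro p q ⟨a, ha, b, hb, h⟩
    refine ⟨1 - b, by linarith, 1 - a, by linarith, fun θ hθ => ?_⟩
    have hmem : 1 - θ ∈ Set.Ioo a b := ⟨by cases hθ; linarith, by cases hθ; linarith⟩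
    filter_upwards [h (1 - θ) hmem] with x hx
    have : (1 - (1 - θ)) * p.1 x + (1 - θ) * q.1 x
        = (1 - θ) * q.1 x + θ * p.1 x := by ring
    linarith
  · -- transitivity
    rintro p q r ⟨a, ha, b, hb, h1⟩ ⟨a', ha', b', hb', h2⟩
    -- symmetric versions
    have h1' : ∀ θ ∈ Set.Ioo (1 - b) (1 - a), ∀ᵐ x ∂μ, 0 < (1 - θ) * q.1 x + θ * p.1 x := by
      intro θ hθ
      have hmem : 1 - θ ∈ Set.Ioo a b := ⟨by cases hθ; linarith, by cases hθ; linarith⟩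
      filter_upwards [h1 (1 - θ) hmem] with x hx
      nlinarith [hx]
    have h2' : ∀ θ ∈ Set.Ioo (1 - b') (1 - a'), ∀ᵐ x ∂μ, 0 < (1 - θ) * r.1 x + θ * q.1 x := by
      intro θ hθ
      have hmem : 1 - θ ∈ Set.Ioo a' b' := ⟨by cases hθ; linarith, by cases hθ; linarith⟩
      filter_upwards [h2 (1 - θ) hmem] with x hx
      nlinarith [hx]
    obtain ⟨δ₁, hδ₁, H₁⟩ := open_mixture_trans_right μ p.1 q.1 r.1 ha hb ha' hb' h1 h2
    obtain ⟨δ₂, hδ₂, H₂⟩ := open_mixture_trans_right μ r.1 q.1 p.1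
      (by linarith : 1 - b' < 0) (by linarith : (1:ℝ) < 1 - a') (by linarith : 1 - b < 0) (by linarith : (1:ℝ) < 1 - a)
      h2' h1'
    refine ⟨-δ₂, by linarith, 1 + δ₁, by linarith, fun θ hθ => ?_⟩
    obtain ⟨hθl, hθr⟩ := hθ
    rcases lt_trichotomy θ 0 with hθ0 | hθ0 | hθ0
    · -- θ < 0 : use H₂ at 1 - θ
      have := H₂ (1 - θ) (by linarith) (by linarith)
      filter_upwards [this] with x hx
      nlinarith [hx]
    · subst hθ0
      filter_upwards [p.2.2.1] with x hx
      simpa using hx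
    · rcases lt_trichotomy θ 1 with hθ1 | hθ1 | hθ1
      · -- 0 < θ < 1 : convexity
        filter_upwards [p.2.2.1, r.2.2.1] with x hp hr
        have h1x : 0 < (1 - θ) * p.1 x := mul_pos (by linarith) hp
        have h2x : 0 ≤ θ * r.1 x := mul_nonneg (by linarith) hr.le
        linarith
      · subst hθ1
        filter_upwards [r.2.2.1] with x hx
        simpa using hx
      · -- θ > 1 : use H₁
        exact H₁ θ hθ1 hθr
end

section
/- Two strictly positive densities p and q on a probability space are connected by an open mixture arc if and only if the ratio q/p is μ-a.e. bounded above and below by positive constants, i.e., there exist constants 0 < c₁ < 1 < c₂ with c₁ < q/p < c₂ μ-a.e. -/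
open MeasureTheory Real Set

/-- `p` and `q` are connected by an open mixture arc iff the ratio `q/p` is a.e. bounded
above and below by positive constants `c₁ < 1 < c₂`. -/
theorem open_mixture_arc_iff_bounded_ratio
    {X : Type*} [MeasurableSpace X] (μ : Measure X) [IsProbabilityMeasure μ]
    (p q : X → ℝ) (hp : Measurable p) (hq : Measurable q)
    (hp_pos : ∀ᵐ x ∂μ, 0 < p x) (hq_pos : ∀ᵐ x ∂μ, 0 < q x)
    (hp_int : ∫ x, p x ∂μ = 1) (hq_int : ∫ x, q x ∂μ = 1) :
    (∃ a < (0 : ℝ), ∃ b > (1 : ℝ), ∀ θ ∈ Set.Ioo a b,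
        ∀ᵐ x ∂μ, 0 < (1 - θ) * p x + θ * q x) ↔
    (∃ c₁ c₂ : ℝ, 0 < c₁ ∧ c₁ < 1 ∧ 1 < c₂ ∧
        ∀ᵐ x ∂μ, c₁ < q x / p x ∧ q x / p x < c₂) := by
  constructor
  · rintro ⟨a, ha, b, hb, h⟩
    have h0 := h (a/2) ⟨by linarith, by linarith⟩
    have h1 := h ((1+b)/2) ⟨by linarith, by linarith⟩
    refine ⟨1 - 2/(1+b), 1 - 2/a, ?_, ?_, ?_, ?_⟩
    · have : 2/(1+b) < 1 := by
        rw [div_lt_one (by linarith)]; linarith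
      linarith
    · have : 0 < 2/(1+b) := by positivity
      linarith
    · have : 2/a < 0 := div_neg_of_pos_of_neg (by norm_num) ha
      linarith
    · filter_upwards [hp_pos, hq_pos, h0, h1] with x hpx hqx hx0 hx1
      constructor
      · rw [lt_div_iff₀ hpx]
        have key : (1 - 2/(1+b)) * (1+b) = b - 1 := by field_simp; ring
        nlinarith [mul_pos hpx (show (0:ℝ) < 1 + b by linarith)]
      · rw [div_lt_iff₀ hpx]
        have ha0 : a ≠ 0 := ne_of_lt ha
        have key : (1 - 2/a) * a = a - 2 := by field_simp
        nlinarith [mul_pos hpx (show (0:ℝ) < -a by linarith)]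
  · rintro ⟨c₁, c₂, hc₁, hc₁1, hc₂, hae⟩
    have hc₂' : (0:ℝ) < c₂ - 1 := by linarith
    have hc₁' : (0:ℝ) < 1 - c₁ := by linarith
    have hneg : -(1/(c₂ - 1)) < (0:ℝ) := by
      have : (0:ℝ) < 1/(c₂ - 1) := by positivity
      linarith
    refine ⟨-(1/(c₂ - 1)), hneg, 1/(1 - c₁), ?_, ?_⟩
    · rw [gt_iff_lt, lt_div_iff₀ hc₁']; nlinarith
    · rintro θ ⟨hθa, hθb⟩
      filter_upwards [hp_pos, hq_pos, hae] with x hpx hqx hx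
      obtain ⟨hl, hr⟩ := hx
      have hql : c₁ * p x < q x := (lt_div_iff₀ hpx).mp hl
      have hqr : q x < c₂ * p x := (div_lt_iff₀ hpx).mp hr
      rcases le_or_gt θ 0 with hθ | hθ
      · have h1 : -1 < θ * (c₂ - 1) := by
          have := mul_lt_mul_of_pos_right hθa hc₂'
          rwa [show -(1/(c₂-1)) * (c₂-1) = -1 by field_simp] at this
        nlinarith [mul_pos hpx (show (0:ℝ) < 1 + θ * (c₂ - 1) by linarith),
          mul_nonneg (neg_nonneg.mpr hθ) (show (0:ℝ) ≤ c₂ * p x - q x by linarith)]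
      · rcases lt_or_ge θ 1 with hθ1 | hθ1
        · nlinarith [mul_pos (show (0:ℝ) < 1 - θ by linarith) hpx, mul_pos hθ hqx]
        · have h2 : θ * (1 - c₁) < 1 := by
            have := mul_lt_mul_of_pos_right hθb hc₁'
            rwa [show 1/(1-c₁) * (1-c₁) = 1 by field_simp] at this
          nlinarith [mul_pos hpx (show (0:ℝ) < 1 - θ * (1 - c₁) by linarith),
            mul_nonneg (le_of_lt hθ) (show (0:ℝ) ≤ q x - c₁ * p x by linarith)]
end

section
/- If two strictly positive densities p and q are connected by an open mixture arc (equivalently, q/p and p/q are essentially bounded), then p and q are connected by an open exponential arc, i.e., ∫ p^{1−θ}·q^{θ} dμ < ∞ for all θ in some open interval containing [0,1]. -/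
open MeasureTheory Real Set

private lemma rpow_ratio_bound {r C θ : ℝ} (hr : 0 < r) (hC : 1 ≤ C)
    (h1 : r ≤ C) (h2 : C⁻¹ ≤ r) (hθ1 : -1 ≤ θ) (hθ2 : θ ≤ 2) :
    r ^ θ ≤ C ^ (2 : ℝ) := by
  have hC0 : (0 : ℝ) < C := lt_of_lt_of_le one_pos hC
  rcases le_or_gt 0 θ with h | h
  · calc r ^ θ ≤ C ^ θ := Real.rpow_le_rpow hr.le h1 h
      _ ≤ C ^ (2 : ℝ) := Real.rpow_le_rpow_of_exponent_le hC hθ2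
  · have hnθ : 0 ≤ -θ := by linarith
    have h3 : (C⁻¹) ^ (-θ) ≤ r ^ (-θ) :=
      Real.rpow_le_rpow (by positivity) h2 hnθ
    have h4 : (C⁻¹ : ℝ) ^ (-θ) = C ^ θ := by
      rw [Real.inv_rpow hC0.le, Real.rpow_neg hC0.le, inv_inv]
    have h5 : C ^ (-2 : ℝ) ≤ C ^ θ :=
      Real.rpow_le_rpow_of_exponent_le hC (by linarith)
    have h6 : C ^ (-2 : ℝ) ≤ r ^ (-θ) := by
      rw [← h4] at h5; exact le_trans h5 h3
    have h7 : r ^ θ = (r ^ (-θ))⁻¹ := by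
      rw [← Real.rpow_neg hr.le, neg_neg]
    rw [h7]
    have hpos : (0 : ℝ) < C ^ (-2 : ℝ) := Real.rpow_pos_of_pos hC0 _
    have h8 : (r ^ (-θ))⁻¹ ≤ (C ^ (-2 : ℝ))⁻¹ :=
      inv_anti₀ hpos h6
    calc (r ^ (-θ))⁻¹ ≤ (C ^ (-2 : ℝ))⁻¹ := h8
      _ = C ^ (2 : ℝ) := by
          rw [← Real.rpow_neg hC0.le, neg_neg]

/-- If `p` and `q` are connected by an open mixture arc, then they are connected by an
open exponential arc. -/
theorem open_exponential_arc_of_open_mixture_arc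
    {X : Type*} [MeasurableSpace X] (μ : Measure X) [IsProbabilityMeasure μ]
    (p q : X → ℝ) (hp : Measurable p) (hq : Measurable q)
    (hp_pos : ∀ᵐ x ∂μ, 0 < p x) (hq_pos : ∀ᵐ x ∂μ, 0 < q x)
    (hp_int : ∫ x, p x ∂μ = 1) (hq_int : ∫ x, q x ∂μ = 1)
    (hmix : ∃ a < (0 : ℝ), ∃ b > (1 : ℝ), ∀ θ ∈ Set.Ioo a b,
      ∀ᵐ x ∂μ, 0 < (1 - θ) * p x + θ * q x) :
    ∃ a < (0 : ℝ), ∃ b > (1 : ℝ), ∀ θ ∈ Set.Ioo a b,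
      Integrable (fun x => p x ^ (1 - θ) * q x ^ θ) μ := by
  obtain ⟨a, ha, b, hb, hmix⟩ := hmix
  -- p is integrable
  have hpInt : Integrable p μ := by
    by_contra h
    rw [integral_undef h] at hp_int
    norm_num at hp_int
  -- from θ = a/2 < 0 : q ≤ C₁ p a.e.
  set t₁ : ℝ := a / 2 with ht₁def
  have ht₁ : t₁ < 0 := by simp [ht₁def]; linarith
  have ht₁mem : t₁ ∈ Set.Ioo a b := ⟨by simp [ht₁def]; linarith, by simp [ht₁def]; linarith⟩
  set C₁ : ℝ := (1 - t₁) / (-t₁) with hC₁def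
  have hqp : ∀ᵐ x ∂μ, q x ≤ C₁ * p x := by
    filter_upwards [hmix t₁ ht₁mem, hp_pos] with x hx hpx
    rw [hC₁def, div_mul_eq_mul_div, le_div_iff₀ (by linarith)]
    nlinarith
  -- from θ = (1+b)/2 > 1 : p ≤ C₂ q a.e.
  set t₂ : ℝ := (1 + b) / 2 with ht₂def
  have ht₂ : 1 < t₂ := by rw [ht₂def]; linarith
  have ht₂mem : t₂ ∈ Set.Ioo a b := ⟨by rw [ht₂def]; linarith, by rw [ht₂def]; linarith⟩
  set C₂ : ℝ := t₂ / (t₂ - 1) with hC₂def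
  have hpq : ∀ᵐ x ∂μ, p x ≤ C₂ * q x := by
    filter_upwards [hmix t₂ ht₂mem, hq_pos] with x hx hqx
    rw [hC₂def, div_mul_eq_mul_div, le_div_iff₀ (by linarith)]
    nlinarith
  set C : ℝ := max C₁ (max C₂ 1) with hCdef
  have hC1 : 1 ≤ C := le_trans (le_max_right _ _) (le_max_right _ _)
  have hC0 : 0 < C := lt_of_lt_of_le one_pos hC1
  have hC₁C : C₁ ≤ C := le_max_left _ _
  have hC₂C : C₂ ≤ C := le_trans (le_max_left _ _) (le_max_right _ _)
  refine ⟨-1, by norm_num, 2, by norm_num, fun θ hθ => ?_⟩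
  have hmeas : AEStronglyMeasurable (fun x => p x ^ (1 - θ) * q x ^ θ) μ := by
    have : Measurable (fun x => p x ^ (1 - θ) * q x ^ θ) := by fun_prop
    exact this.aestronglyMeasurable
  refine Integrable.mono' (hpInt.const_mul (C ^ (2 : ℝ))) hmeas ?_
  filter_upwards [hp_pos, hq_pos, hqp, hpq] with x hpx hqx hqpx hpqx
  have hr : 0 < q x / p x := div_pos hqx hpx
  have hr1 : q x / p x ≤ C := by
    rw [div_le_iff₀ hpx]
    calc q x ≤ C₁ * p x := hqpx
      _ ≤ C * p x := mul_le_mul_of_nonneg_right hC₁C hpx.le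
  have hr2 : C⁻¹ ≤ q x / p x := by
    rw [le_div_iff₀ hpx, inv_mul_le_iff₀ hC0]
    calc p x ≤ C₂ * q x := hpqx
      _ ≤ C * q x := mul_le_mul_of_nonneg_right hC₂C hqx.le
  have hbound : (q x / p x) ^ θ ≤ C ^ (2 : ℝ) :=
    rpow_ratio_bound hr hC1 hr1 hr2 hθ.1.le hθ.2.le
  have hval : p x ^ (1 - θ) * q x ^ θ = p x * (q x / p x) ^ θ := by
    rw [Real.div_rpow hqx.le hpx.le, Real.rpow_sub hpx, Real.rpow_one]
    ring
  rw [Real.norm_of_nonneg (by positivity), hval]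
  calc p x * (q x / p x) ^ θ ≤ p x * C ^ (2 : ℝ) :=
        mul_le_mul_of_nonneg_left hbound hpx.le
    _ = C ^ (2 : ℝ) * p x := by ring
end

section
/- For the beta-type densities p(x) = β₁·x^{β₁−1} and q(x) = β₂·x^{β₂−1} on [0,1] with Lebesgue measure, where 0 < β₁ < β₂, p and q are connected by an open exponential arc but are not connected by an open mixture arc. -/
open MeasureTheory Real Set

/-- The beta-type densities `p(x) = β₁ x^{β₁−1}` and `q(x) = β₂ x^{β₂−1}` on `[0,1]`
with `0 < β₁ < β₂` are connected by an open exponential arc but not by an open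
mixture arc. -/
theorem beta_densities_exponential_not_mixture
    (β₁ β₂ : ℝ) (h₁ : 0 < β₁) (h₁₂ : β₁ < β₂)
    (p q : ℝ → ℝ)
    (hp : ∀ x, p x = β₁ * x ^ (β₁ - 1))
    (hq : ∀ x, q x = β₂ * x ^ (β₂ - 1)) :
    (∃ a < (0 : ℝ), ∃ b > (1 : ℝ), ∀ θ ∈ Set.Ioo a b,
        IntegrableOn (fun x => p x ^ (1 - θ) * q x ^ θ) (Set.Icc 0 1) volume) ∧
    ¬ (∃ a < (0 : ℝ), ∃ b > (1 : ℝ), ∀ θ ∈ Set.Ioo a b,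
        ∀ᵐ x ∂(volume.restrict (Set.Icc (0:ℝ) 1)), 0 < (1 - θ) * p x + θ * q x) := by
  have hd : 0 < β₂ - β₁ := sub_pos.2 h₁₂
  have h₂ : 0 < β₂ := h₁.trans h₁₂
  constructor
  · refine ⟨-β₁ / (2 * (β₂ - β₁)), div_neg_of_neg_of_pos (by linarith) (by linarith),
      2, one_lt_two, ?_⟩
    intro θ hθ
    have hθ1 : -β₁ < θ * (2 * (β₂ - β₁)) := (div_lt_iff₀ (by linarith)).1 hθ.1
    set r : ℝ := (β₁ - 1) * (1 - θ) + (β₂ - 1) * θ with hr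
    have hrpos : -1 < r := by
      have : 0 < β₁ + θ * (β₂ - β₁) := by nlinarith
      simp only [hr]; nlinarith
    have hint : IntegrableOn (fun x : ℝ => β₁ ^ (1 - θ) * β₂ ^ θ * x ^ r)
        (Set.Ioc 0 1) volume := by
      exact ((intervalIntegral.intervalIntegrable_rpow' hrpos (a := 0) (b := 1)).1).const_mul _
    rw [integrableOn_Icc_iff_integrableOn_Ioc]
    refine hint.congr_fun ?_ measurableSet_Ioc
    intro x hx
    have hx0 : 0 < x := hx.1
    simp only [hp, hq]
    rw [Real.mul_rpow h₁.le (Real.rpow_nonneg hx0.le _),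
        Real.mul_rpow h₂.le (Real.rpow_nonneg hx0.le _),
        ← Real.rpow_mul hx0.le, ← Real.rpow_mul hx0.le]
    rw [show β₁ ^ (1 - θ) * x ^ ((β₁ - 1) * (1 - θ)) * (β₂ ^ θ * x ^ ((β₂ - 1) * θ)) =
        β₁ ^ (1 - θ) * β₂ ^ θ * (x ^ ((β₁ - 1) * (1 - θ)) * x ^ ((β₂ - 1) * θ)) by ring,
      ← Real.rpow_add hx0]
  · rintro ⟨a, ha, b, hb, h⟩
    set θ : ℝ := (1 + b) / 2 with hθdef
    have hθ1 : 1 < θ := by simp only [hθdef]; linarith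
    have hθmem : θ ∈ Set.Ioo a b := ⟨by linarith, by simp only [hθdef]; linarith⟩
    have key := h θ hθmem
    set c : ℝ := (θ - 1) * β₁ / (θ * β₂) with hc
    have hcpos : 0 < c := by
      apply div_pos <;> nlinarith
    set δ : ℝ := min 1 (c ^ (1 / (β₂ - β₁))) with hδ
    have hδpos : 0 < δ := lt_min one_pos (Real.rpow_pos_of_pos hcpos _)
    have hδ1 : δ ≤ 1 := min_le_left _ _
    have hδc : δ ^ (β₂ - β₁) ≤ c := by
      calc δ ^ (β₂ - β₁) ≤ (c ^ (1 / (β₂ - β₁))) ^ (β₂ - β₁) :=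
            Real.rpow_le_rpow hδpos.le (min_le_right _ _) hd.le
        _ = c := by
            rw [← Real.rpow_mul hcpos.le, one_div_mul_cancel hd.ne', Real.rpow_one]
    -- bad set
    have hbad : ∀ x ∈ Set.Ioc (0:ℝ) δ, ¬ (0 < (1 - θ) * p x + θ * q x) := by
      intro x hx
      have hx0 : 0 < x := hx.1
      have hxpow : x ^ (β₂ - β₁) ≤ c := by
        calc x ^ (β₂ - β₁) ≤ δ ^ (β₂ - β₁) :=
              Real.rpow_le_rpow hx0.le hx.2 hd.le
          _ ≤ c := hδc
      have hfac : (1 - θ) * p x + θ * q x =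
          x ^ (β₁ - 1) * ((1 - θ) * β₁ + θ * β₂ * x ^ (β₂ - β₁)) := by
        have hsplit : x ^ (β₂ - 1) = x ^ (β₁ - 1) * x ^ (β₂ - β₁) := by
          rw [← Real.rpow_add hx0]; ring_nf
        rw [hp, hq, hsplit]; ring
      rw [hfac]
      push_neg
      apply mul_nonpos_of_nonneg_of_nonpos (Real.rpow_nonneg hx0.le _)
      have : θ * β₂ * x ^ (β₂ - β₁) ≤ θ * β₂ * c :=
        mul_le_mul_of_nonneg_left hxpow (by nlinarith)
      have hcc : θ * β₂ * c = (θ - 1) * β₁ := by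
        rw [hc]; field_simp [(by linarith : (θ:ℝ) ≠ 0), h₂.ne']
        try ring
      nlinarith
    rw [ae_restrict_iff' measurableSet_Icc] at key
    have hsub : Set.Ioc (0:ℝ) δ ⊆ {x | ¬ (x ∈ Set.Icc (0:ℝ) 1 → 0 < (1 - θ) * p x + θ * q x)} := by
      intro x hx
      simp only [Set.mem_setOf_eq, Classical.not_imp]
      exact ⟨⟨hx.1.le, hx.2.trans hδ1⟩, hbad x hx⟩
    have h0 : volume (Set.Ioc (0:ℝ) δ) = 0 := measure_mono_null hsub key
    rw [Real.volume_Ioc] at h0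
    simp only [sub_zero] at h0
    exact absurd h0 (by simp [ENNReal.ofReal_eq_zero, not_le, hδpos])
end

section
/- Let p, q be strictly positive densities. The condition 'log(q/p) belongs to L^{Φ₁}(p) ∩ L^{Φ₁}(q)' (with Φ₁(x)=cosh(x)−1) is equivalent to: there exists ε > 0 such that ∫ (q/p)^{1+ε}·p dμ < ∞ and ∫ (p/q)^{1+ε}·q dμ < ∞. -/
open MeasureTheory Real Set

lemma rpow_le_exp_mul_abs_log {r t t' : ℝ} (hr : 0 < r) (ht : 0 ≤ t) (htt' : t ≤ t') :
    r ^ t ≤ Real.exp (t' * |Real.log r|) := by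
  rw [Real.rpow_def_of_pos hr]
  apply Real.exp_le_exp.mpr
  calc Real.log r * t ≤ |Real.log r| * t := by
        apply mul_le_mul_of_nonneg_right (le_abs_self _) ht
    _ ≤ |Real.log r| * t' := by
        apply mul_le_mul_of_nonneg_left htt' (abs_nonneg _)
    _ = t' * |Real.log r| := mul_comm _ _

lemma exp_abs_log_le {r t : ℝ} (hr : 0 < r) :
    Real.exp (t * |Real.log r|) ≤ r ^ t + r ^ (-t) := by
  rcases abs_cases (Real.log r) with ⟨h, _⟩ | ⟨h, _⟩
  · rw [h]
    calc Real.exp (t * Real.log r) = r ^ t := by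
          rw [Real.rpow_def_of_pos hr, mul_comm]
      _ ≤ r ^ t + r ^ (-t) := le_add_of_nonneg_right (Real.rpow_nonneg hr.le _)
  · rw [h]
    calc Real.exp (t * -Real.log r) = r ^ (-t) := by
          rw [Real.rpow_def_of_pos hr]; ring_nf
      _ ≤ r ^ t + r ^ (-t) := le_add_of_nonneg_left (Real.rpow_nonneg hr.le _)

lemma rpow_le_one_add_rpow {r s t : ℝ} (hr : 0 < r) (hs : 0 ≤ s) (hst : s ≤ t) :
    r ^ s ≤ 1 + r ^ t := by
  rcases le_total r 1 with h | h
  · have : r ^ s ≤ 1 := Real.rpow_le_one hr.le h hs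
    linarith [Real.rpow_nonneg hr.le t]
  · have : r ^ s ≤ r ^ t := Real.rpow_le_rpow_of_exponent_le h hst
    linarith


lemma abs_log_div_comm (a b : ℝ) : |Real.log (a / b)| = |Real.log (b / a)| := by
  rw [← inv_div b a, Real.log_inv, abs_neg]

lemma keyf {a b ε α : ℝ} (ha : 0 < a) (hb : 0 < b) (hε : 0 ≤ ε) (hεα : ε ≤ α) :
    (b / a) ^ (1 + ε) * a ≤ Real.exp (α * |Real.log (b / a)|) * b := by
  have hr : 0 < b / a := div_pos hb ha
  have e1 : (b / a) ^ (1 + ε) * a = (b / a) ^ ε * b := by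
    rw [show (1 : ℝ) + ε = ε + 1 by ring, Real.rpow_add hr, Real.rpow_one, mul_assoc,
      div_mul_cancel₀ _ ha.ne']
  rw [e1]
  exact mul_le_mul_of_nonneg_right (rpow_le_exp_mul_abs_log hr hε hεα) hb.le

lemma key1 {a b ε : ℝ} (ha : 0 < a) (hb : 0 < b) (hε : 0 < ε) :
    Real.exp (ε * |Real.log (b / a)|) * a ≤
      a + ((b / a) ^ (1 + ε) * a + (a / b) ^ (1 + ε) * b) := by
  have hr : 0 < b / a := div_pos hb ha
  have hinv : a / b = (b / a)⁻¹ := (inv_div b a).symm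
  have e1 : (a / b) ^ (1 + ε) = (b / a) ^ (-(1 + ε)) := by
    rw [hinv, Real.inv_rpow hr.le, ← Real.rpow_neg hr.le]
  have e2 : (b / a) ^ (-(1 + ε)) * b = (b / a) ^ (-ε) * a := by
    rw [show -(1 + ε) = -ε + -1 by ring, Real.rpow_add hr, Real.rpow_neg_one, mul_assoc,
      ← hinv, div_mul_cancel₀ _ hb.ne']
  calc Real.exp (ε * |Real.log (b / a)|) * a
      ≤ ((b / a) ^ ε + (b / a) ^ (-ε)) * a :=
        mul_le_mul_of_nonneg_right (exp_abs_log_le hr) ha.le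
    _ = (b / a) ^ ε * a + (b / a) ^ (-ε) * a := add_mul _ _ _
    _ ≤ (1 + (b / a) ^ (1 + ε)) * a + (b / a) ^ (-ε) * a := by
        have := rpow_le_one_add_rpow hr hε.le (by linarith : ε ≤ 1 + ε)
        exact add_le_add_left (mul_le_mul_of_nonneg_right this ha.le) _
    _ = a + ((b / a) ^ (1 + ε) * a + (b / a) ^ (-ε) * a) := by ring
    _ = a + ((b / a) ^ (1 + ε) * a + (a / b) ^ (1 + ε) * b) := by rw [e1, e2]

lemma key2 {a b ε : ℝ} (ha : 0 < a) (hb : 0 < b) (hε : 0 < ε) :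
    Real.exp (ε * |Real.log (b / a)|) * b ≤
      b + ((b / a) ^ (1 + ε) * a + (a / b) ^ (1 + ε) * b) := by
  have := key1 hb ha hε
  rw [abs_log_div_comm a b] at this
  linarith

/-- `log(q/p) ∈ L^{Φ₁}(p) ∩ L^{Φ₁}(q)` iff there is `ε > 0` with
`∫ (q/p)^{1+ε} p dμ < ∞` and `∫ (p/q)^{1+ε} q dμ < ∞`. -/
theorem log_ratio_orlicz_iff_moment_conditions
    {X : Type*} [MeasurableSpace X] (μ : Measure X) [IsProbabilityMeasure μ]
    (p q : X → ℝ) (hp : Measurable p) (hq : Measurable q)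
    (hp_pos : ∀ᵐ x ∂μ, 0 < p x) (hq_pos : ∀ᵐ x ∂μ, 0 < q x)
    (hp_int : ∫ x, p x ∂μ = 1) (hq_int : ∫ x, q x ∂μ = 1) :
    ((∃ α > (0 : ℝ),
        Integrable (fun x => Real.exp (α * |Real.log (q x / p x)|) * p x) μ) ∧
     (∃ α > (0 : ℝ),
        Integrable (fun x => Real.exp (α * |Real.log (q x / p x)|) * q x) μ)) ↔
    (∃ ε > (0 : ℝ),
      Integrable (fun x => (q x / p x) ^ (1 + ε) * p x) μ ∧
      Integrable (fun x => (p x / q x) ^ (1 + ε) * q x) μ) := by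
  have hpint : Integrable p μ := integrable_of_integral_eq_one hp_int
  have hqint : Integrable q μ := integrable_of_integral_eq_one hq_int
  have mexp : ∀ α : ℝ, Measurable fun x => Real.exp (α * |Real.log (q x / p x)|) :=
    fun α => (((hq.div hp).log.abs.const_mul α).exp)
  have m1 : ∀ ε : ℝ, Measurable fun x => (q x / p x) ^ (1 + ε) * p x :=
    fun ε => by measurability
  have m2 : ∀ ε : ℝ, Measurable fun x => (p x / q x) ^ (1 + ε) * q x :=
    fun ε => by measurability
  constructor
  · rintro ⟨⟨α₁, hα₁, h1⟩, ⟨α₂, hα₂, h2⟩⟩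
    refine ⟨min α₁ α₂, lt_min hα₁ hα₂, ?_, ?_⟩
    · refine h2.mono' (m1 _).aestronglyMeasurable ?_
      filter_upwards [hp_pos, hq_pos] with x hpx hqx
      have hr : 0 < q x / p x := div_pos hqx hpx
      rw [Real.norm_eq_abs, abs_of_nonneg (mul_nonneg (Real.rpow_nonneg hr.le _) hpx.le)]
      exact keyf hpx hqx (le_of_lt (lt_min hα₁ hα₂)) (min_le_right _ _)
    · refine h1.mono' (m2 _).aestronglyMeasurable ?_
      filter_upwards [hp_pos, hq_pos] with x hpx hqx
      have hr : 0 < p x / q x := div_pos hpx hqx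
      rw [Real.norm_eq_abs, abs_of_nonneg (mul_nonneg (Real.rpow_nonneg hr.le _) hqx.le)]
      have := keyf hqx hpx (le_of_lt (lt_min hα₁ hα₂)) (min_le_left _ _)
      rwa [abs_log_div_comm (p x) (q x)] at this
  · rintro ⟨ε, hε, h1, h2⟩
    have hsum : Integrable
        (fun x => p x + ((q x / p x) ^ (1 + ε) * p x + (p x / q x) ^ (1 + ε) * q x)) μ :=
      hpint.add (h1.add h2)
    have hsum' : Integrable
        (fun x => q x + ((q x / p x) ^ (1 + ε) * p x + (p x / q x) ^ (1 + ε) * q x)) μ :=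
      hqint.add (h1.add h2)
    constructor
    · refine ⟨ε, hε, hsum.mono' ((mexp ε).mul hp).aestronglyMeasurable ?_⟩
      filter_upwards [hp_pos, hq_pos] with x hpx hqx
      rw [Real.norm_eq_abs, abs_of_nonneg (mul_nonneg (Real.exp_pos _).le hpx.le)]
      exact key1 hpx hqx hε
    · refine ⟨ε, hε, hsum'.mono' ((mexp ε).mul hq).aestronglyMeasurable ?_⟩
      filter_upwards [hp_pos, hq_pos] with x hpx hqx
      rw [Real.norm_eq_abs, abs_of_nonneg (mul_nonneg (Real.exp_pos _).le hqx.le)]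
      exact key2 hpx hqx hε
end

section
/- Let p, q be strictly positive densities. If there exists ε > 0 such that ∫ (q/p)^{1+ε}·p dμ < ∞ and ∫ (q/p)^{−ε}·p dμ < ∞, then p and q are connected by an open exponential arc: ∫ p^{1−θ}q^{θ} dμ < ∞ for all θ in an open interval containing [0,1]. -/
open MeasureTheory Real Set

lemma rpow_le_add_of_mem {r a b θ : ℝ} (hr : 0 < r) (ha : a ≤ θ) (hb : θ ≤ b) :
    r ^ θ ≤ r ^ a + r ^ b := by
  rcases le_total r 1 with h | h
  · have := Real.rpow_le_rpow_of_exponent_ge hr h ha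
    nlinarith [Real.rpow_nonneg hr.le b]
  · have := Real.rpow_le_rpow_of_exponent_le h hb
    nlinarith [Real.rpow_nonneg hr.le a]

/-- If `∫ (q/p)^{1+ε} p dμ < ∞` and `∫ (q/p)^{−ε} p dμ < ∞` for some `ε > 0`, then `p` and
`q` are connected by an open exponential arc. -/
theorem open_exponential_arc_of_moment_conditions
    {X : Type*} [MeasurableSpace X] (μ : Measure X) [IsProbabilityMeasure μ]
    (p q : X → ℝ) (hp : Measurable p) (hq : Measurable q)
    (hp_pos : ∀ᵐ x ∂μ, 0 < p x) (hq_pos : ∀ᵐ x ∂μ, 0 < q x)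
    (hp_int : ∫ x, p x ∂μ = 1) (hq_int : ∫ x, q x ∂μ = 1)
    (hmom : ∃ ε > (0 : ℝ),
      Integrable (fun x => (q x / p x) ^ (1 + ε) * p x) μ ∧
      Integrable (fun x => (q x / p x) ^ (-ε) * p x) μ) :
    ∃ a < (0 : ℝ), ∃ b > (1 : ℝ), ∀ θ ∈ Set.Ioo a b,
      Integrable (fun x => p x ^ (1 - θ) * q x ^ θ) μ := by
  obtain ⟨ε, hε, h1, h2⟩ := hmom
  refine ⟨-ε, by linarith, 1 + ε, by linarith, fun θ hθ => ?_⟩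
  have hbound : Integrable
      (fun x => (q x / p x) ^ (-ε) * p x + (q x / p x) ^ (1 + ε) * p x) μ := h2.add h1
  refine hbound.mono ?_ ?_
  · exact (Measurable.aestronglyMeasurable (by fun_prop))
  · filter_upwards [hp_pos, hq_pos] with x hpx hqx
    have hr : 0 < q x / p x := div_pos hqx hpx
    have key : p x ^ (1 - θ) * q x ^ θ = (q x / p x) ^ θ * p x := by
      rw [Real.div_rpow hqx.le hpx.le, Real.rpow_sub hpx, Real.rpow_one]
      ring
    rw [Real.norm_eq_abs, Real.norm_eq_abs, key]
    have h3 : (q x / p x) ^ θ ≤ (q x / p x) ^ (-ε) + (q x / p x) ^ (1 + ε) :=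
      rpow_le_add_of_mem hr hθ.1.le hθ.2.le
    have hge : 0 ≤ (q x / p x) ^ θ * p x :=
      mul_nonneg (Real.rpow_nonneg hr.le _) hpx.le
    have hge2 : 0 ≤ (q x / p x) ^ (-ε) * p x + (q x / p x) ^ (1 + ε) * p x := by
      positivity
    rw [abs_of_nonneg hge, abs_of_nonneg hge2]
    nlinarith
end

section
/- Let p, q be strictly positive densities connected by an open exponential arc, i.e., ∫ (q/p)^θ·p dμ < ∞ for all θ in an open interval I ⊃ [0,1]. Then for every λ ∈ [0,1] the mixture p(λ) = λ·p + (1−λ)·q is also connected to p by an open exponential arc. In particular, the maximal exponential model E(p) is convex. -/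
open MeasureTheory Real Set

/-- If `p` and `q` are connected by an open exponential arc, then every mixture
`λ·p + (1−λ)·q`, `λ ∈ [0,1]`, is connected to `p` by an open exponential arc
(convexity of the maximal exponential model). -/
theorem maximal_exponential_model_convex
    {X : Type*} [MeasurableSpace X] (μ : Measure X) [IsProbabilityMeasure μ]
    (p q : X → ℝ) (hp : Measurable p) (hq : Measurable q)
    (hp_pos : ∀ᵐ x ∂μ, 0 < p x) (hq_pos : ∀ᵐ x ∂μ, 0 < q x)
    (hp_int : ∫ x, p x ∂μ = 1) (hq_int : ∫ x, q x ∂μ = 1)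
    (a b : ℝ) (ha : a < 0) (hb : 1 < b)
    (harc : ∀ θ ∈ Set.Ioo a b, Integrable (fun x => (q x / p x) ^ θ * p x) μ) :
    ∀ lam ∈ Set.Icc (0 : ℝ) 1,
      ∃ a' < (0 : ℝ), ∃ b' > (1 : ℝ), ∀ θ ∈ Set.Ioo a' b',
        Integrable (fun x => (lam * p x + (1 - lam) * q x) ^ θ * p x ^ (1 - θ)) μ := by
  have hp_i : Integrable p μ := by
    by_contra h
    rw [integral_undef h] at hp_int
    norm_num at hp_int
  intro lam hlam
  refine ⟨a, ha, b, hb, ?_⟩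
  intro θ hθ
  have hqp : Integrable (fun x => (q x / p x) ^ θ * p x) μ := harc θ hθ
  have hmeas : AEStronglyMeasurable
      (fun x => (lam * p x + (1 - lam) * q x) ^ θ * p x ^ (1 - θ)) μ := by
    apply Measurable.aestronglyMeasurable
    fun_prop
  refine (hp_i.add hqp).mono' hmeas ?_
  filter_upwards [hp_pos, hq_pos] with x hpx hqx
  set m := lam * p x + (1 - lam) * q x with hm
  have hmin : min (p x) (q x) ≤ m := by
    nlinarith [min_le_left (p x) (q x), min_le_right (p x) (q x), hlam.1, hlam.2]
  have hmax : m ≤ max (p x) (q x) := by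
    nlinarith [le_max_left (p x) (q x), le_max_right (p x) (q x), hlam.1, hlam.2]
  have hm_pos : 0 < m := lt_of_lt_of_le (lt_min hpx hqx) hmin
  have key : m ^ θ ≤ p x ^ θ + q x ^ θ := by
    rcases le_or_gt 0 θ with hθ0 | hθ0
    · calc m ^ θ ≤ max (p x) (q x) ^ θ := Real.rpow_le_rpow hm_pos.le hmax hθ0
        _ ≤ p x ^ θ + q x ^ θ := by
          rcases le_total (p x) (q x) with h | h
          · rw [max_eq_right h]
            nlinarith [Real.rpow_nonneg hpx.le θ]
          · rw [max_eq_left h]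
            nlinarith [Real.rpow_nonneg hqx.le θ]
    · calc m ^ θ ≤ min (p x) (q x) ^ θ :=
          Real.rpow_le_rpow_of_nonpos (lt_min hpx hqx) hmin hθ0.le
        _ ≤ p x ^ θ + q x ^ θ := by
          rcases le_total (p x) (q x) with h | h
          · rw [min_eq_left h]
            nlinarith [Real.rpow_nonneg hqx.le θ]
          · rw [min_eq_right h]
            nlinarith [Real.rpow_nonneg hpx.le θ]
  have hp1θ : (0:ℝ) ≤ p x ^ (1 - θ) := Real.rpow_nonneg hpx.le _
  rw [Real.norm_of_nonneg (mul_nonneg (Real.rpow_nonneg hm_pos.le θ) hp1θ)]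
  have h1 : p x ^ θ * p x ^ (1 - θ) = p x := by
    rw [← Real.rpow_add hpx]; simp
  have h2 : q x ^ θ * p x ^ (1 - θ) = (q x / p x) ^ θ * p x := by
    rw [Real.rpow_sub hpx, Real.rpow_one, Real.div_rpow hqx.le hpx.le]
    field_simp
  calc m ^ θ * p x ^ (1 - θ) ≤ (p x ^ θ + q x ^ θ) * p x ^ (1 - θ) :=
        mul_le_mul_of_nonneg_right key hp1θ
    _ = p x + (q x / p x) ^ θ * p x := by rw [add_mul, h1, h2]
end

section
/- Let p, q be strictly positive densities connected by an open exponential arc and let λ ∈ [0,1], r = λp + (1−λ)q. Then for θ ∈ (0,1), ∫ r^θ·p^{1−θ} dμ ≤ 1, and for θ outside [0,1] but within the interval of the arc, ∫ r^θ·p^{1−θ} dμ ≤ λ + (1−λ)·∫ (q/p)^θ·p dμ < ∞. -/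
open MeasureTheory Real Set

lemma convexOn_rpow_neg {θ : ℝ} (hθ : θ < 0) :
    ConvexOn ℝ (Ioi (0:ℝ)) fun x : ℝ => x ^ θ := by
  have himg : (fun x : ℝ => θ * Real.log x) '' (Ioi 0) = univ := by
    ext y
    simp only [mem_image, mem_univ, iff_true]
    exact ⟨Real.exp (y / θ), Real.exp_pos _, by
      rw [Real.log_exp, mul_div_cancel₀ _ (ne_of_lt hθ)]⟩
  have hf : ConvexOn ℝ (Ioi (0:ℝ)) fun x => θ * Real.log x := by
    have h1 : ConvexOn ℝ (Ioi (0:ℝ)) fun x => -Real.log x :=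
      (strictConcaveOn_log_Ioi.concaveOn).neg
    have h2 := h1.smul (c := -θ) (by linarith)
    refine h2.congr ?_
    intro x _
    change -θ * -Real.log x = θ * Real.log x
    ring
  have hg : ConvexOn ℝ ((fun x : ℝ => θ * Real.log x) '' (Ioi 0)) Real.exp := by
    rw [himg]; exact convexOn_exp
  have hmono : MonotoneOn Real.exp ((fun x : ℝ => θ * Real.log x) '' (Ioi 0)) :=
    Real.exp_monotone.monotoneOn _
  have hcomp := hg.comp hf hmono
  refine hcomp.congr ?_
  intro x hx
  simp only [Function.comp_apply]
  rw [Real.rpow_def_of_pos hx, mul_comm]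

lemma rpow_convex_combo {θ lam t : ℝ} (hθ : θ < 0 ∨ 1 < θ) (hlam0 : 0 ≤ lam)
    (hlam1 : lam ≤ 1) (ht : 0 < t) :
    (lam + (1 - lam) * t) ^ θ ≤ lam + (1 - lam) * t ^ θ := by
  rcases hθ with hθ | hθ
  · have C := convexOn_rpow_neg hθ
    have h := C.2 (mem_Ioi.2 one_pos) (mem_Ioi.2 ht) hlam0 (sub_nonneg.2 hlam1) (by ring)
    simpa [smul_eq_mul, Real.one_rpow] using h
  · have C := convexOn_rpow (le_of_lt hθ)
    have h := C.2 (mem_Ici.2 zero_le_one) (mem_Ici.2 ht.le) hlam0 (sub_nonneg.2 hlam1) (by ring)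
    simpa [smul_eq_mul, Real.one_rpow] using h

/-- Quantitative bounds for the mixture `r = λp + (1−λ)q` along an open exponential arc:
for `θ ∈ (0,1)`, `∫ r^θ p^{1−θ} dμ ≤ 1`; for `θ` in the interval of the arc but outside
`[0,1]`, `∫ r^θ p^{1−θ} dμ ≤ λ + (1−λ)·∫ (q/p)^θ p dμ < ∞`. -/
theorem mixture_power_integral_bounds
    {X : Type*} [MeasurableSpace X] (μ : Measure X) [IsProbabilityMeasure μ]
    (p q : X → ℝ) (hp : Measurable p) (hq : Measurable q)
    (hp_pos : ∀ᵐ x ∂μ, 0 < p x) (hq_pos : ∀ᵐ x ∂μ, 0 < q x)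
    (hp_int : ∫ x, p x ∂μ = 1) (hq_int : ∫ x, q x ∂μ = 1)
    (a b : ℝ) (ha : a < 0) (hb : 1 < b)
    (harc : ∀ θ ∈ Set.Ioo a b, Integrable (fun x => (q x / p x) ^ θ * p x) μ)
    (lam : ℝ) (hlam : lam ∈ Set.Icc (0 : ℝ) 1)
    (r : X → ℝ) (hr : ∀ x, r x = lam * p x + (1 - lam) * q x) :
    (∀ θ ∈ Set.Ioo (0 : ℝ) 1, ∫ x, r x ^ θ * p x ^ (1 - θ) ∂μ ≤ 1) ∧
    (∀ θ ∈ Set.Ioo a b, θ ∉ Set.Icc (0 : ℝ) 1 →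
      Integrable (fun x => r x ^ θ * p x ^ (1 - θ)) μ ∧
      ∫ x, r x ^ θ * p x ^ (1 - θ) ∂μ ≤ lam + (1 - lam) * ∫ x, (q x / p x) ^ θ * p x ∂μ) := by
  obtain ⟨hlam0, hlam1⟩ := hlam
  have hrfun : r = fun x => lam * p x + (1 - lam) * q x := funext hr
  have hrm : Measurable r := by rw [hrfun]; fun_prop
  -- integrability of p, q, r
  have hIntp : Integrable p μ := by
    have h0 := harc 0 ⟨ha, by linarith⟩
    simpa [Real.rpow_zero] using h0
  have hIntq : Integrable q μ := by
    have h1 := harc 1 ⟨by linarith, hb⟩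
    refine h1.congr ?_
    filter_upwards [hp_pos] with x hx
    rw [Real.rpow_one, div_mul_cancel₀ _ (ne_of_gt hx)]
  have hIntr : Integrable r μ := by
    rw [hrfun]
    exact (hIntp.const_mul lam).add (hIntq.const_mul (1 - lam))
  have hr_int : ∫ x, r x ∂μ = 1 := by
    rw [hrfun, integral_add (hIntp.const_mul lam) (hIntq.const_mul (1 - lam)),
      integral_const_mul, integral_const_mul, hp_int, hq_int]
    ring
  -- a.e. positivity of r
  have hr_pos : ∀ᵐ x ∂μ, 0 < r x := by
    filter_upwards [hp_pos, hq_pos] with x hpx hqx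
    rw [hr]
    rcases lt_or_eq_of_le hlam0 with h0 | h0
    · have h1 : 0 < lam * p x := mul_pos h0 hpx
      have h2 : 0 ≤ (1 - lam) * q x := mul_nonneg (by linarith) hqx.le
      linarith
    · rw [← h0]; simpa using hqx
  constructor
  · -- θ ∈ (0,1)
    rintro θ ⟨hθ0, hθ1⟩
    have hdom : Integrable (fun x => θ * r x + (1 - θ) * p x) μ :=
      (hIntr.const_mul θ).add (hIntp.const_mul (1 - θ))
    have hle : (∫ x, r x ^ θ * p x ^ (1 - θ) ∂μ) ≤ ∫ x, θ * r x + (1 - θ) * p x ∂μ := by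
      refine integral_mono_of_nonneg ?_ hdom ?_
      · filter_upwards [hr_pos, hp_pos] with x hrx hpx
        exact mul_nonneg (Real.rpow_nonneg hrx.le _) (Real.rpow_nonneg hpx.le _)
      · filter_upwards [hr_pos, hp_pos] with x hrx hpx
        exact Real.geom_mean_le_arith_mean2_weighted hθ0.le (by linarith) hrx.le hpx.le
          (by ring)
    calc ∫ x, r x ^ θ * p x ^ (1 - θ) ∂μ ≤ ∫ x, θ * r x + (1 - θ) * p x ∂μ := hle
      _ = 1 := by
          rw [integral_add (hIntr.const_mul θ) (hIntp.const_mul (1 - θ)),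
            integral_const_mul, integral_const_mul, hr_int, hp_int]
          ring
  · -- θ outside [0,1]
    intro θ hθab hθnot
    have hθ' : θ < 0 ∨ 1 < θ := by
      by_contra h
      push_neg at h
      exact hθnot ⟨h.1, h.2⟩
    have harcθ := harc θ hθab
    -- the dominating function
    set g : X → ℝ := fun x => lam * p x + (1 - lam) * ((q x / p x) ^ θ * p x) with hg_def
    have hIntg : Integrable g μ := (hIntp.const_mul lam).add (harcθ.const_mul (1 - lam))
    -- pointwise a.e. inequality
    have hptwise : ∀ᵐ x ∂μ, r x ^ θ * p x ^ (1 - θ) ≤ g x := by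
      filter_upwards [hp_pos, hq_pos] with x hpx hqx
      have ht : 0 < q x / p x := div_pos hqx hpx
      have hr_eq : r x = (lam + (1 - lam) * (q x / p x)) * p x := by
        rw [hr]
        field_simp
      have hbase : 0 ≤ lam + (1 - lam) * (q x / p x) := by
        have := mul_nonneg (by linarith : (0:ℝ) ≤ 1 - lam) ht.le
        linarith
      have h1 : r x ^ θ = (lam + (1 - lam) * (q x / p x)) ^ θ * p x ^ θ := by
        rw [hr_eq, Real.mul_rpow hbase hpx.le]
      have h2 : p x ^ θ * p x ^ (1 - θ) = p x := by
        rw [← Real.rpow_add hpx]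
        simp
      have h3 : r x ^ θ * p x ^ (1 - θ) = (lam + (1 - lam) * (q x / p x)) ^ θ * p x := by
        rw [h1, mul_assoc, h2]
      rw [h3]
      have hconv := rpow_convex_combo hθ' hlam0 hlam1 ht
      calc (lam + (1 - lam) * (q x / p x)) ^ θ * p x
          ≤ (lam + (1 - lam) * (q x / p x) ^ θ) * p x :=
            mul_le_mul_of_nonneg_right hconv hpx.le
        _ = g x := by simp only [hg_def]; ring
    have hnonneg : ∀ᵐ x ∂μ, 0 ≤ r x ^ θ * p x ^ (1 - θ) := by
      filter_upwards [hr_pos, hp_pos] with x hrx hpx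
      exact mul_nonneg (Real.rpow_nonneg hrx.le _) (Real.rpow_nonneg hpx.le _)
    have hmeas : AEStronglyMeasurable (fun x => r x ^ θ * p x ^ (1 - θ)) μ :=
      ((hrm.pow measurable_const).mul (hp.pow measurable_const)).aestronglyMeasurable
    have hIntf : Integrable (fun x => r x ^ θ * p x ^ (1 - θ)) μ := by
      refine hIntg.mono' hmeas ?_
      filter_upwards [hptwise, hnonneg] with x h1 h2
      rwa [Real.norm_eq_abs, abs_of_nonneg h2]
    refine ⟨hIntf, ?_⟩
    have hle := integral_mono_of_nonneg hnonneg hIntg hptwise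
    calc ∫ x, r x ^ θ * p x ^ (1 - θ) ∂μ ≤ ∫ x, g x ∂μ := hle
      _ = lam + (1 - lam) * ∫ x, (q x / p x) ^ θ * p x ∂μ := by
          rw [hg_def]
          rw [integral_add (hIntp.const_mul lam) (harcθ.const_mul (1 - lam)),
            integral_const_mul, integral_const_mul, hp_int]
          ring
end

section
/- For any strictly positive density p on a probability space (X, F, μ), the open mixture model M(p) = {q strictly positive density : q/p and p/q are essentially bounded} is dense in the set of all (nonnegative) probability densities with respect to the L¹(μ) topology. -/
open MeasureTheory Real Set

/-- The open mixture model `M(p)` (densities with ratio to `p` bounded above and below by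
positive constants) is `L¹(μ)`-dense in the set of all nonnegative probability
densities. -/
theorem open_mixture_model_dense_L1
    {X : Type*} [MeasurableSpace X] (μ : Measure X) [IsProbabilityMeasure μ]
    (p : X → ℝ) (hp : Measurable p) (hp_pos : ∀ᵐ x ∂μ, 0 < p x)
    (hp_int : ∫ x, p x ∂μ = 1) :
    ∀ q : X → ℝ, Measurable q → (∀ᵐ x ∂μ, 0 ≤ q x) → (∫ x, q x ∂μ = 1) →
      ∀ ε > (0 : ℝ), ∃ r : X → ℝ,
        Measurable r ∧ (∀ᵐ x ∂μ, 0 < r x) ∧ (∫ x, r x ∂μ = 1) ∧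
        (∃ c₁ c₂ : ℝ, 0 < c₁ ∧ c₁ < c₂ ∧ ∀ᵐ x ∂μ, c₁ < r x / p x ∧ r x / p x < c₂) ∧
        ∫ x, |r x - q x| ∂μ < ε := by
  intro q hq hq_nonneg hq1 ε hε
  -- integrability of p and q
  have hp_int' : Integrable p μ := by
    by_contra h
    rw [integral_undef h] at hp_int
    norm_num at hp_int
  have hq_int : Integrable q μ := by
    by_contra h
    rw [integral_undef h] at hq1
    norm_num at hq1
  -- truncations
  set f : ℕ → X → ℝ := fun n x => min (q x) (n * p x) with hf_def
  have hf_meas : ∀ n, Measurable (f n) := fun n => hq.min (measurable_const.mul hp)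
  have hf_nonneg : ∀ n, ∀ᵐ x ∂μ, 0 ≤ f n x := by
    intro n
    filter_upwards [hq_nonneg, hp_pos] with x hqx hpx
    exact le_min hqx (by positivity)
  have hf_int : ∀ n, Integrable (f n) μ := by
    intro n
    refine hq_int.mono (hf_meas n).aestronglyMeasurable ?_
    filter_upwards [hq_nonneg, hp_pos] with x hqx hpx
    rw [Real.norm_eq_abs, Real.norm_eq_abs, abs_of_nonneg (le_min hqx (by positivity)),
      abs_of_nonneg hqx]
    exact min_le_left _ _
  -- dominated convergence
  have h_tend : Filter.Tendsto (fun n : ℕ => ∫ x, f n x ∂μ) Filter.atTop (nhds 1) := by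
    rw [← hq1]
    refine tendsto_integral_of_dominated_convergence q
      (fun n => (hf_meas n).aestronglyMeasurable) hq_int ?_ ?_
    · intro n
      filter_upwards [hq_nonneg, hp_pos] with x hqx hpx
      rw [Real.norm_eq_abs, abs_of_nonneg (le_min hqx (by positivity))]
      exact min_le_left _ _
    · filter_upwards [hp_pos] with x hpx
      have h1 : Filter.Tendsto (fun n : ℕ => (n : ℝ) * p x) Filter.atTop Filter.atTop :=
        Filter.Tendsto.atTop_mul_const hpx tendsto_natCast_atTop_atTop
      refine Filter.Tendsto.congr' ?_ tendsto_const_nhds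
      filter_upwards [h1.eventually_ge_atTop (q x)] with n hn
      exact (min_eq_left hn).symm
  -- choose a and N
  set a : ℝ := ε / 8 with ha_def
  have ha_pos : 0 < a := by positivity
  have hδ : (0 : ℝ) < min (ε / 8) (1 / 2) := by positivity
  obtain ⟨N, hN⟩ := Metric.tendsto_atTop.mp h_tend _ hδ
  have hNN := hN N le_rfl
  rw [Real.dist_eq] at hNN
  set I : ℝ := ∫ x, f N x ∂μ with hI_def
  have hI_close1 : |I - 1| < ε / 8 := lt_of_lt_of_le hNN (min_le_left _ _)
  have hI_close2 : |I - 1| < 1 / 2 := lt_of_lt_of_le hNN (min_le_right _ _)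
  have hI_nonneg : 0 ≤ I := integral_nonneg_of_ae (hf_nonneg N)
  have hI_le_one : I ≤ 1 := by
    rw [← hq1]
    refine integral_mono_ae (hf_int N) hq_int ?_
    filter_upwards with x
    exact min_le_left _ _
  have hI_half : 1 / 2 < I := by
    rcases abs_lt.mp hI_close2 with ⟨h1, _⟩
    linarith
  have hIa_pos : 0 < I + a := by linarith
  -- the approximant
  set r : X → ℝ := fun x => (f N x + a * p x) / (I + a) with hr_def
  have hr_meas : Measurable r := ((hf_meas N).add (measurable_const.mul hp)).div_const _
  have hr_int : Integrable r μ := ((hf_int N).add (hp_int'.const_mul a)).div_const _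
  refine ⟨r, hr_meas, ?_, ?_, ?_, ?_⟩
  · -- positivity
    filter_upwards [hq_nonneg, hp_pos] with x hqx hpx
    have hfx : 0 ≤ f N x := le_min hqx (by positivity)
    exact div_pos (by nlinarith) hIa_pos
  · -- integral = 1
    rw [hr_def]
    rw [integral_div, integral_add (hf_int N) (hp_int'.const_mul a),
      integral_const_mul, hp_int, ← hI_def]
    field_simp
  · -- ratio bounds
    refine ⟨a / (2 * (I + a)), ((N : ℝ) + a + 1) / (I + a), by positivity, ?_, ?_⟩
    · rw [div_lt_div_iff₀ (by positivity) hIa_pos]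
      have hN0 : (0 : ℝ) ≤ (N : ℝ) := Nat.cast_nonneg N
      nlinarith
    · filter_upwards [hq_nonneg, hp_pos] with x hqx hpx
      have hfx : 0 ≤ f N x := le_min hqx (by positivity)
      have hfx2 : f N x ≤ (N : ℝ) * p x := min_le_right _ _
      constructor
      · rw [div_lt_div_iff₀ (by positivity) hpx]
        have hkey : r x * (2 * (I + a)) = 2 * (f N x + a * p x) := by
          rw [hr_def]
          field_simp
        nlinarith
      · rw [div_lt_div_iff₀ hpx hIa_pos]
        have hkey : r x * (I + a) = f N x + a * p x := by
          rw [hr_def]; field_simp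
        nlinarith
  · -- L¹ error
    have habsbound : ∀ᵐ x ∂μ, |r x - f N x| ≤ (|1 - I - a| * f N x + a * p x) / (I + a) := by
      filter_upwards [hq_nonneg, hp_pos] with x hqx hpx
      have hfx : 0 ≤ f N x := le_min hqx (by positivity)
      have hkey : r x - f N x = ((1 - I - a) * f N x + a * p x) / (I + a) := by
        rw [hr_def]; field_simp; ring
      rw [hkey, abs_div, abs_of_pos hIa_pos]
      gcongr
      calc |(1 - I - a) * f N x + a * p x| ≤ |(1 - I - a) * f N x| + |a * p x| := abs_add_le _ _
        _ = |1 - I - a| * f N x + a * p x := by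
            rw [abs_mul, abs_of_nonneg hfx, abs_mul, abs_of_pos ha_pos, abs_of_pos hpx]
    have hbound_int : Integrable (fun x => (|1 - I - a| * f N x + a * p x) / (I + a)) μ :=
      (((hf_int N).const_mul _).add (hp_int'.const_mul a)).div_const _
    have h1 : ∫ x, |r x - f N x| ∂μ ≤ (|1 - I - a| * I + a) / (I + a) := by
      have := integral_mono_ae (hr_int.sub (hf_int N)).abs hbound_int habsbound
      refine le_trans this (le_of_eq ?_)
      rw [integral_div, integral_add ((hf_int N).const_mul _) (hp_int'.const_mul a),
        integral_const_mul, integral_const_mul, hp_int, ← hI_def, mul_one]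
    have h2 : ∫ x, |f N x - q x| ∂μ = 1 - I := by
      have : ∀ᵐ x ∂μ, |f N x - q x| = q x - f N x := by
        filter_upwards with x
        rw [abs_sub_comm, abs_of_nonneg (sub_nonneg.mpr (min_le_left _ _))]
      rw [integral_congr_ae this, integral_sub hq_int (hf_int N), hq1, ← hI_def]
    have hi1 : Integrable (fun x => |r x - f N x|) μ := (hr_int.sub (hf_int N)).abs
    have hi2 : Integrable (fun x => |f N x - q x|) μ := ((hf_int N).sub hq_int).abs
    have hi3 : Integrable (fun x => |r x - q x|) μ := (hr_int.sub hq_int).abs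
    have h3 : ∫ x, |r x - q x| ∂μ ≤ ∫ x, |r x - f N x| ∂μ + ∫ x, |f N x - q x| ∂μ := by
      rw [← integral_add hi1 hi2]
      refine integral_mono_ae hi3 (hi1.add hi2) ?_
      filter_upwards with x
      calc |r x - q x| = |(r x - f N x) + (f N x - q x)| := by ring_nf
        _ ≤ |r x - f N x| + |f N x - q x| := abs_add_le _ _
    -- numeric estimates
    have hc : |1 - I - a| ≤ ε / 4 := by
      have : |1 - I - a| ≤ |1 - I| + |a| := abs_sub _ _
      rw [abs_sub_comm] at hI_close1
      rw [abs_of_pos ha_pos] at this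
      linarith
    have h4 : (|1 - I - a| * I + a) / (I + a) ≤ 3 * ε / 4 := by
      rw [div_le_iff₀ hIa_pos]
      have habs_nonneg : 0 ≤ |1 - I - a| := abs_nonneg _
      nlinarith
    have h5 : 1 - I < ε / 8 := by
      rcases abs_lt.mp hI_close1 with ⟨h1', _⟩
      linarith
    calc ∫ x, |r x - q x| ∂μ ≤ ∫ x, |r x - f N x| ∂μ + ∫ x, |f N x - q x| ∂μ := h3
      _ ≤ 3 * ε / 4 + (1 - I) := by rw [h2]; linarith
      _ < ε := by linarith
end
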